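/- arXiv:2402.17696 — 7 statements merged into one kernel-verified Lean document; each statement's English description precedes it below -/
import Mathlib

section
/- Let U and D be complex Hilbert spaces, S : U → D a bounded linear operator, σ > 0, d ∈ D with d ≠ 0, and let u_σ be the Tikhonov minimizer of u ↦ ‖Su − d‖² + σ‖u‖². If ‖Su_σ − d‖ ≤ (1/2)‖d‖, then σ ≤ 2‖S‖². -/
set_option maxHeartbeats 1000000

open scoped InnerProductSpace ComplexConjugate

/-- Let `U` and `D` be complex Hilbert spaces, `S : U → D` a bounded linear
operator, `σ > 0`, `d ∈ D` with `d ≠ 0`, and let `u_σ` be the Tikhonov minimizer of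
`u ↦ ‖S u − d‖² + σ‖u‖²`. If `‖S u_σ − d‖ ≤ (1/2)‖d‖`, then `σ ≤ 2‖S‖²`. -/
theorem tikhonov_small_residual_forces_small_regularization
    {U D : Type*}
    [NormedAddCommGroup U] [InnerProductSpace ℂ U] [CompleteSpace U]
    [NormedAddCommGroup D] [InnerProductSpace ℂ D] [CompleteSpace D]
    (S : U →L[ℂ] D) (σ : ℝ) (hσ : 0 < σ) (d : D) (hd : d ≠ 0)
    (uσ : U)
    (huσ : ∀ v : U, ‖S uσ - d‖ ^ 2 + σ * ‖uσ‖ ^ 2 ≤ ‖S v - d‖ ^ 2 + σ * ‖v‖ ^ 2)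
    (hres : ‖S uσ - d‖ ≤ (1 / 2) * ‖d‖) :
    σ ≤ 2 * ‖S‖ ^ 2 := by
  set a := S uσ - d with ha
  set b := S uσ with hb
  set r := ‖uσ‖ with hr
  set A : ℝ := Complex.re ⟪a, b⟫_ℂ + σ * r ^ 2 with hA
  set B : ℝ := ‖b‖ ^ 2 + σ * r ^ 2 with hB
  have hB0 : 0 ≤ B := by positivity
  -- key variational inequality: for all real t, 0 ≤ 2*t*A + t^2*B
  have key : ∀ t : ℝ, 0 ≤ 2 * t * A + t ^ 2 * B := by
    intro t
    have h := huσ (((1 + t : ℝ) : ℂ) • uσ)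
    have hS : S (((1 + t : ℝ) : ℂ) • uσ) - d = a + ((t : ℝ) : ℂ) • b := by
      simp only [map_smul, ha, hb]
      push_cast
      module
    rw [hS] at h
    have hnorm1 : ‖a + ((t : ℝ) : ℂ) • b‖ ^ 2
        = ‖a‖ ^ 2 + 2 * Complex.re ⟪a, ((t : ℝ) : ℂ) • b⟫_ℂ + ‖((t : ℝ) : ℂ) • b‖ ^ 2 :=
      norm_add_sq (𝕜 := ℂ) a _
    have hre : Complex.re ⟪a, ((t : ℝ) : ℂ) • b⟫_ℂ = t * Complex.re ⟪a, b⟫_ℂ := by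
      rw [inner_smul_right]
      simp
    have hnb : ‖((t : ℝ) : ℂ) • b‖ = |t| * ‖b‖ := by
      rw [norm_smul]; simp
    have hns : ‖(((1 + t : ℝ) : ℂ)) • uσ‖ = |1 + t| * r := by
      rw [norm_smul, Complex.norm_real, Real.norm_eq_abs, hr]
    rw [hnorm1, hre] at h
    rw [hnb, hns] at h
    have h1 : (|t| * ‖b‖) ^ 2 = t ^ 2 * ‖b‖ ^ 2 := by
      rw [mul_pow, sq_abs]
    have h2 : (|1 + t| * r) ^ 2 = (1 + t) ^ 2 * r ^ 2 := by
      rw [mul_pow, sq_abs]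
    rw [h1, h2] at h
    nlinarith [h]
  -- conclude A = 0
  have hAzero : A = 0 := by
    have h := key (-A / (B + 1))
    have hB1 : (0:ℝ) < B + 1 := by linarith
    have : 0 ≤ -A ^ 2 * (B + 2) / (B + 1) ^ 2 := by
      have e : 2 * (-A / (B + 1)) * A + (-A / (B + 1)) ^ 2 * B
          = -A ^ 2 * (B + 2) / (B + 1) ^ 2 := by
        field_simp; ring
      rw [e] at h; exact h
    have h2 : -A ^ 2 * (B + 2) ≥ 0 := by
      have := div_nonneg_iff.mp this
      rcases this with ⟨h1, _⟩ | ⟨_, h2⟩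
      · exact h1
      · nlinarith [sq_nonneg (B + 1)]
    nlinarith [sq_nonneg A]
  -- σ r² = -re⟪a,b⟫ ≤ ‖a‖‖b‖
  have habs : Complex.re ⟪a, b⟫_ℂ ≤ ‖a‖ * ‖b‖ := by
    calc Complex.re ⟪a, b⟫_ℂ ≤ ‖⟪a, b⟫_ℂ‖ := Complex.re_le_norm _
    _ = ‖⟪a, b⟫_ℂ‖ := rfl
    _ ≤ ‖a‖ * ‖b‖ := norm_inner_le_norm a b
  have habs' : -(‖a‖ * ‖b‖) ≤ Complex.re ⟪a, b⟫_ℂ := by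
    have : Complex.re ⟪-a, b⟫_ℂ ≤ ‖-a‖ * ‖b‖ := by
      calc Complex.re ⟪-a, b⟫_ℂ ≤ ‖⟪-a, b⟫_ℂ‖ := Complex.re_le_norm _
      _ = ‖⟪-a, b⟫_ℂ‖ := rfl
      _ ≤ ‖-a‖ * ‖b‖ := norm_inner_le_norm _ b
    rw [inner_neg_left, norm_neg] at this
    simp only [Complex.neg_re] at this
    linarith
  have hσr : σ * r ^ 2 ≤ ‖a‖ * ‖b‖ := by
    have : σ * r ^ 2 = -Complex.re ⟪a, b⟫_ℂ := by linarith [hAzero]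
    linarith
  -- ‖b‖ ≤ ‖S‖ r
  have hbS : ‖b‖ ≤ ‖S‖ * r := S.le_opNorm uσ
  -- ½‖d‖ ≤ ‖S‖ r
  have hd0 : 0 < ‖d‖ := norm_pos_iff.mpr hd
  have htri : ‖d‖ ≤ ‖b‖ + ‖a‖ := by
    have : d = b - a := by rw [ha, hb]; abel
    calc ‖d‖ = ‖b - a‖ := by rw [this]
    _ ≤ ‖b‖ + ‖a‖ := norm_sub_le b a
  have hhalf : (1/2) * ‖d‖ ≤ ‖S‖ * r := by
    have := hres
    nlinarith [hbS]
  have hr0 : 0 < r := by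
    by_contra h
    push_neg at h
    have : r = 0 := le_antisymm h (norm_nonneg _)
    rw [this] at hhalf
    simp at hhalf
    nlinarith
  have ha0 : ‖a‖ ≤ ‖S‖ * r := le_trans hres hhalf
  -- σ r² ≤ (‖S‖ r)²
  have hfin : σ * r ^ 2 ≤ (‖S‖ * r) ^ 2 := by
    have hSr0 : (0:ℝ) ≤ ‖S‖ * r := le_trans (norm_nonneg a) ha0
    have h1 : ‖a‖ * ‖b‖ ≤ (‖S‖ * r) * (‖S‖ * r) :=
      mul_le_mul ha0 hbS (norm_nonneg b) hSr0
    calc σ * r ^ 2 ≤ ‖a‖ * ‖b‖ := hσr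
    _ ≤ (‖S‖ * r) * (‖S‖ * r) := h1
    _ = (‖S‖ * r) ^ 2 := (sq _).symm
  have hfin2 : σ * r ^ 2 ≤ ‖S‖ ^ 2 * r ^ 2 := by
    rw [mul_pow] at hfin; exact hfin
  have hle : σ ≤ ‖S‖ ^ 2 :=
    le_of_mul_le_mul_right (by linarith [hfin2]) (by positivity : (0:ℝ) < r ^ 2)
  nlinarith [sq_nonneg ‖S‖]
end

section
/- Let U and D be complex Hilbert spaces, σ > 0, and let S⁰, S¹ : U → D be bounded linear operators; set S = S⁰ + S¹. Let d, d⁰ ∈ D, and let u_σ and u⁰_σ be the Tikhonov minimizers of u ↦ ‖Su − d‖² + σ‖u‖² and u ↦ ‖S⁰u − d⁰‖² + σ‖u‖², respectively. Then the identity ((S⁰)*S⁰ + σI)(u_σ − u⁰_σ) = (S¹)*d + (S⁰)*(d − d⁰) − ((S⁰)*S¹ + (S¹)*S⁰ + (S¹)*S¹)u_σ holds, and consequently ‖u_σ − u⁰_σ‖ ≤ σ⁻¹ ( ‖S¹‖‖d‖ + ‖S⁰‖‖d − d⁰‖ + (2‖S⁰‖‖S¹‖ + ‖S¹‖²)‖u_σ‖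 ). -/
open ContinuousLinearMap
open scoped InnerProductSpace ComplexConjugate
open ContinuousLinearMap
open scoped InnerProductSpace ComplexConjugate

lemma quad_nonneg_lin_zero (a b : ℝ) (ha : 0 ≤ a) (h : ∀ t : ℝ, 0 ≤ a * t^2 + b * t) : b = 0 := by
  have h2a : (0:ℝ) < 2*a+1 := by linarith
  have ht := h (-b / (2*a+1))
  have heq : a * (-b / (2*a+1))^2 + b * (-b / (2*a+1)) = (-(b^2) * (a+1)) / (2*a+1)^2 := by
    field_simp; ring
  rw [heq] at ht
  have hnum : 0 ≤ -(b^2) * (a+1) := by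
    have hpos : (0:ℝ) < (2*a+1)^2 := by positivity
    exact (div_nonneg_iff.mp ht).resolve_right (fun ⟨_, h2⟩ => absurd h2 (not_le.mpr hpos)) |>.1
  nlinarith [sq_nonneg b]

lemma tikhonov_normal_eq
    {U D : Type*}
    [NormedAddCommGroup U] [InnerProductSpace ℂ U] [CompleteSpace U]
    [NormedAddCommGroup D] [InnerProductSpace ℂ D] [CompleteSpace D]
    (S : U →L[ℂ] D) (σ : ℝ) (hσ : 0 < σ) (d : D) (u : U)
    (h : ∀ v : U, ‖S u - d‖ ^ 2 + σ * ‖u‖ ^ 2 ≤ ‖S v - d‖ ^ 2 + σ * ‖v‖ ^ 2) :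
    adjoint S (S u - d) + σ • u = 0 := by
  letI : InnerProductSpace ℝ U := InnerProductSpace.complexToReal
  letI : InnerProductSpace ℝ D := InnerProductSpace.complexToReal
  have hre : ∀ v : U, (⟪S u - d, S v⟫_ℝ + σ * ⟪u, v⟫_ℝ) = 0 := by
    intro v
    have key : ∀ t : ℝ, 0 ≤ (‖S v‖^2 + σ * ‖v‖^2) * t^2 +
        (2 * (⟪S u - d, S v⟫_ℝ + σ * ⟪u, v⟫_ℝ)) * t := by
      intro t
      have h1 := h (u + t • v)
      have e1 : S (u + t • v) - d = (S u - d) + t • S v := by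
        rw [map_add, map_smul_of_tower]; abel
      rw [e1] at h1
      have n1 : ‖(S u - d) + t • S v‖^2 = ‖S u - d‖^2 + 2 * (t * ⟪S u - d, S v⟫_ℝ) + t^2 * ‖S v‖^2 := by
        rw [norm_add_sq_real, real_inner_smul_right, norm_smul, Real.norm_eq_abs,
          mul_pow, sq_abs]
      have n2 : ‖u + t • v‖^2 = ‖u‖^2 + 2 * (t * ⟪u, v⟫_ℝ) + t^2 * ‖v‖^2 := by
        rw [norm_add_sq_real, real_inner_smul_right, norm_smul, Real.norm_eq_abs,
          mul_pow, sq_abs]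
      rw [n1, n2] at h1
      nlinarith [h1]
    have := quad_nonneg_lin_zero (‖S v‖^2 + σ * ‖v‖^2)
      (2 * (⟪S u - d, S v⟫_ℝ + σ * ⟪u, v⟫_ℝ))
      (by positivity) key
    linarith
  have hre' : ∀ v : U, Complex.re ⟪S u - d, S v⟫_ℂ + σ * Complex.re ⟪u, v⟫_ℂ = 0 := by
    intro v
    have := hre v
    rwa [real_inner_eq_re_inner ℂ, real_inner_eq_re_inner ℂ] at this
  have hfull : ∀ v : U, ⟪adjoint S (S u - d) + σ • u, v⟫_ℂ = 0 := by
    intro v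
    have hR := hre' v
    have hI := hre' (Complex.I • v)
    rw [map_smul] at hI
    simp only [inner_smul_right, Complex.mul_re, Complex.I_re, Complex.I_im] at hI
    ring_nf at hI
    have hrw : ⟪adjoint S (S u - d) + σ • u, v⟫_ℂ =
        ⟪S u - d, S v⟫_ℂ + (σ:ℂ) * ⟪u, v⟫_ℂ := by
      rw [inner_add_left, adjoint_inner_left, ← Complex.coe_smul, inner_smul_left,
        Complex.conj_ofReal]
    rw [hrw]
    apply Complex.ext
    · simpa using hR
    · simp only [Complex.add_im, Complex.mul_im, Complex.ofReal_re, Complex.ofReal_im,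
        Complex.zero_im]
      ring_nf
      linarith [hI]
  exact ext_inner_right ℂ (fun v => by rw [hfull v, inner_zero_left])

lemma coercive_bound
    {U D : Type*}
    [NormedAddCommGroup U] [InnerProductSpace ℂ U] [CompleteSpace U]
    [NormedAddCommGroup D] [InnerProductSpace ℂ D] [CompleteSpace D]
    (S0 : U →L[ℂ] D) (σ : ℝ) (hσ : 0 < σ) (w r : U)
    (h : adjoint S0 (S0 w) + σ • w = r) : ‖w‖ ≤ σ⁻¹ * ‖r‖ := by
  have hinn : Complex.re ⟪r, w⟫_ℂ = ‖S0 w‖ ^ 2 + σ * ‖w‖ ^ 2 := by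
    rw [← h, inner_add_left, adjoint_inner_left, ← Complex.coe_smul, inner_smul_left,
      Complex.conj_ofReal]
    simp [inner_self_eq_norm_sq_to_K, ← Complex.ofReal_pow]
  have h3 : Complex.re ⟪r, w⟫_ℂ ≤ ‖r‖ * ‖w‖ :=
    (Complex.re_le_norm _).trans
      (by exact norm_inner_le_norm r w)
  have hb1 : σ * ‖w‖ ^ 2 ≤ ‖r‖ * ‖w‖ := by nlinarith [sq_nonneg ‖S0 w‖]
  rcases eq_or_lt_of_le (norm_nonneg w) with hz | hz
  · rw [← hz]
    positivity
  · rw [le_inv_mul_iff₀ hσ]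
    nlinarith

set_option maxHeartbeats 1600000 in
/-- Let `U`, `D` be complex Hilbert spaces, `σ > 0`, `S⁰, S¹ : U → D` bounded,
`S = S⁰ + S¹`, `d, d⁰ ∈ D`, and let `u_σ`, `u⁰_σ` be the Tikhonov minimizers of
`u ↦ ‖S u − d‖² + σ‖u‖²` and `u ↦ ‖S⁰ u − d⁰‖² + σ‖u‖²`. Then
`((S⁰)*S⁰ + σI)(u_σ − u⁰_σ) = (S¹)*d + (S⁰)*(d − d⁰) − ((S⁰)*S¹ + (S¹)*S⁰ + (S¹)*S¹) u_σ`,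
and consequently
`‖u_σ − u⁰_σ‖ ≤ σ⁻¹ (‖S¹‖‖d‖ + ‖S⁰‖‖d − d⁰‖ + (2‖S⁰‖‖S¹‖ + ‖S¹‖²)‖u_σ‖)`. -/
theorem tikhonov_perturbation_identity_and_bound
    {U D : Type*}
    [NormedAddCommGroup U] [InnerProductSpace ℂ U] [CompleteSpace U]
    [NormedAddCommGroup D] [InnerProductSpace ℂ D] [CompleteSpace D]
    (S0 S1 : U →L[ℂ] D) (σ : ℝ) (hσ : 0 < σ) (d d0 : D)
    (uσ u0σ : U)
    (huσ : ∀ v : U, ‖(S0 + S1) uσ - d‖ ^ 2 + σ * ‖uσ‖ ^ 2 ≤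
      ‖(S0 + S1) v - d‖ ^ 2 + σ * ‖v‖ ^ 2)
    (hu0σ : ∀ v : U, ‖S0 u0σ - d0‖ ^ 2 + σ * ‖u0σ‖ ^ 2 ≤
      ‖S0 v - d0‖ ^ 2 + σ * ‖v‖ ^ 2) :
    (adjoint S0) (S0 (uσ - u0σ)) + σ • (uσ - u0σ) =
      (adjoint S1) d + (adjoint S0) (d - d0) -
        ((adjoint S0) (S1 uσ) + (adjoint S1) (S0 uσ) + (adjoint S1) (S1 uσ)) ∧
    ‖uσ - u0σ‖ ≤ σ⁻¹ *
      (‖S1‖ * ‖d‖ + ‖S0‖ * ‖d - d0‖ + (2 * ‖S0‖ * ‖S1‖ + ‖S1‖ ^ 2) * ‖uσ‖) := by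

  have hN := tikhonov_normal_eq (S0 + S1) σ hσ d uσ huσ
  have hN0 := tikhonov_normal_eq S0 σ hσ d0 u0σ hu0σ
  have h1 : (adjoint S0) (S0 u0σ) + σ • u0σ = (adjoint S0) d0 := by
    apply eq_of_sub_eq_zero
    calc (adjoint S0) (S0 u0σ) + σ • u0σ - (adjoint S0) d0
        = adjoint S0 (S0 u0σ - d0) + σ • u0σ := by rw [map_sub]; abel
      _ = 0 := hN0
  have h2 : (adjoint S0) (S0 uσ) + σ • uσ =
      (adjoint S0) d + (adjoint S1) d -
        ((adjoint S0) (S1 uσ) + (adjoint S1) (S0 uσ) + (adjoint S1) (S1 uσ)) := by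
    apply eq_of_sub_eq_zero
    have hNe := hN
    simp only [add_apply, map_sub, map_add] at hNe
    calc (adjoint S0) (S0 uσ) + σ • uσ -
          ((adjoint S0) d + (adjoint S1) d -
            ((adjoint S0) (S1 uσ) + (adjoint S1) (S0 uσ) + (adjoint S1) (S1 uσ)))
        = (adjoint S0) (S0 uσ) + (adjoint S1) (S0 uσ) +
            ((adjoint S0) (S1 uσ) + (adjoint S1) (S1 uσ)) -
            ((adjoint S0) d + (adjoint S1) d) + σ • uσ := by abel
      _ = 0 := hNe
  have hid : (adjoint S0) (S0 (uσ - u0σ)) + σ • (uσ - u0σ) =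
      (adjoint S1) d + (adjoint S0) (d - d0) -
        ((adjoint S0) (S1 uσ) + (adjoint S1) (S0 uσ) + (adjoint S1) (S1 uσ)) := by
    rw [map_sub, map_sub, map_sub, smul_sub]
    rw [show (adjoint S0) (S0 uσ) - (adjoint S0) (S0 u0σ) + (σ • uσ - σ • u0σ)
        = ((adjoint S0) (S0 uσ) + σ • uσ) - ((adjoint S0) (S0 u0σ) + σ • u0σ) by abel,
      h1, h2]
    abel
  refine ⟨hid, ?_⟩
  have hc := coercive_bound S0 σ hσ (uσ - u0σ) _ hid
  refine hc.trans ?_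
  have hBr : ‖(adjoint S1) d + (adjoint S0) (d - d0) -
        ((adjoint S0) (S1 uσ) + (adjoint S1) (S0 uσ) + (adjoint S1) (S1 uσ))‖ ≤
      ‖S1‖ * ‖d‖ + ‖S0‖ * ‖d - d0‖ + (2 * ‖S0‖ * ‖S1‖ + ‖S1‖ ^ 2) * ‖uσ‖ := by
    have na0 : ‖adjoint S0‖ = ‖S0‖ := LinearIsometryEquiv.norm_map adjoint S0
    have na1 : ‖adjoint S1‖ = ‖S1‖ := LinearIsometryEquiv.norm_map adjoint S1
    have t1 : ‖(adjoint S1) d‖ ≤ ‖S1‖ * ‖d‖ := by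
      simpa [na1] using (adjoint S1).le_opNorm d
    have t2 : ‖(adjoint S0) (d - d0)‖ ≤ ‖S0‖ * ‖d - d0‖ := by
      simpa [na0] using (adjoint S0).le_opNorm (d - d0)
    have t3 : ‖(adjoint S0) (S1 uσ)‖ ≤ ‖S0‖ * (‖S1‖ * ‖uσ‖) := by
      calc ‖(adjoint S0) (S1 uσ)‖ ≤ ‖adjoint S0‖ * ‖S1 uσ‖ := (adjoint S0).le_opNorm _
        _ ≤ ‖S0‖ * (‖S1‖ * ‖uσ‖) := by
            rw [na0]; exact mul_le_mul_of_nonneg_left (S1.le_opNorm uσ) (norm_nonneg _)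
    have t4 : ‖(adjoint S1) (S0 uσ)‖ ≤ ‖S1‖ * (‖S0‖ * ‖uσ‖) := by
      calc ‖(adjoint S1) (S0 uσ)‖ ≤ ‖adjoint S1‖ * ‖S0 uσ‖ := (adjoint S1).le_opNorm _
        _ ≤ ‖S1‖ * (‖S0‖ * ‖uσ‖) := by
            rw [na1]; exact mul_le_mul_of_nonneg_left (S0.le_opNorm uσ) (norm_nonneg _)
    have t5 : ‖(adjoint S1) (S1 uσ)‖ ≤ ‖S1‖ * (‖S1‖ * ‖uσ‖) := by
      calc ‖(adjoint S1) (S1 uσ)‖ ≤ ‖adjoint S1‖ * ‖S1 uσ‖ := (adjoint S1).le_opNorm _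
        _ ≤ ‖S1‖ * (‖S1‖ * ‖uσ‖) := by
            rw [na1]; exact mul_le_mul_of_nonneg_left (S1.le_opNorm uσ) (norm_nonneg _)
    calc ‖(adjoint S1) d + (adjoint S0) (d - d0) -
          ((adjoint S0) (S1 uσ) + (adjoint S1) (S0 uσ) + (adjoint S1) (S1 uσ))‖
        ≤ ‖(adjoint S1) d‖ + ‖(adjoint S0) (d - d0)‖ +
          (‖(adjoint S0) (S1 uσ)‖ + ‖(adjoint S1) (S0 uσ)‖ + ‖(adjoint S1) (S1 uσ)‖) := by
          refine (norm_sub_le _ _).trans ?_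
          gcongr
          · exact norm_add_le _ _
          · exact (norm_add_le _ _).trans (by gcongr <;> exact norm_add_le _ _)
      _ ≤ ‖S1‖ * ‖d‖ + ‖S0‖ * ‖d - d0‖ + (2 * ‖S0‖ * ‖S1‖ + ‖S1‖ ^ 2) * ‖uσ‖ := by
          nlinarith [t1, t2, t3, t4, t5]
  gcongr
end

section
/- Let w be a nonzero real-valued Schwartz function on ℝ, let μ > 0, and for λ > 0 define w_λ(t) = λ^{−1/2} w(t/λ) and g_λ = 𝓕⁻¹( |𝓕w_λ|² / (|𝓕w_λ|² + λμ) ). Then g_λ(t) = λ^{−1} g_1(t/λ) for almost every t, and consequently ‖g_λ‖²_{L²} = λ^{−1}‖g_1‖²_{L²}, ‖t·g_λ(t)‖²_{L²} = λ‖t·g_1(t)‖²_{L²}, and the pulse width satisfies l(g_λ) = λ·l(g_1). -/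
open MeasureTheory

/-- The scaled wavelet `w_λ(t) = λ^{−1/2} w(t/λ)`. -/
noncomputable def wavScale (w : ℝ → ℂ) (l : ℝ) : ℝ → ℂ :=
  fun t => ((l ^ (-(1 / 2) : ℝ) : ℝ) : ℂ) * w (t / l)

/-- `g_λ = 𝓕⁻¹( |𝓕w_λ|² / (|𝓕w_λ|² + λμ) )`, defined via the inverse Fourier integral. -/
noncomputable def gFilter (w : ℝ → ℂ) (μ : ℝ) (l : ℝ) : ℝ → ℂ :=
  FourierTransformInv.fourierInv (fun ξ =>
    ((‖FourierTransform.fourier (wavScale w l) ξ‖ ^ 2 /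
        (‖FourierTransform.fourier (wavScale w l) ξ‖ ^ 2 + l * μ) : ℝ) : ℂ))

open FourierTransform
open scoped ENNReal NNReal

/-- Scaling behaviour of the 1D Fourier integral; holds unconditionally. -/
lemma fourierIntegral_comp_mul (F : ℝ → ℂ) {l : ℝ} (hl : 0 < l) (ξ : ℝ) :
    FourierTransform.fourier (fun v => F (l * v)) ξ
      = ((l⁻¹ : ℝ) : ℂ) * FourierTransform.fourier F (l⁻¹ * ξ) := by
  rw [Real.fourier_real_eq_integral_exp_smul,
      Real.fourier_real_eq_integral_exp_smul]
  have key : ∀ v : ℝ,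
      Complex.exp (↑(-2 * Real.pi * v * ξ) * Complex.I) • F (l * v)
        = (fun s : ℝ =>
            Complex.exp (↑(-2 * Real.pi * s * (l⁻¹ * ξ)) * Complex.I) • F s) (l * v) := by
    intro v
    simp only
    rw [show -2 * Real.pi * (l * v) * (l⁻¹ * ξ) = -2 * Real.pi * v * ξ by
      field_simp]
  simp_rw [key]
  rw [MeasureTheory.Measure.integral_comp_mul_left
      (fun s => Complex.exp (↑(-2 * Real.pi * s * (l⁻¹ * ξ)) * Complex.I) • F s) l,
      abs_of_pos (inv_pos.mpr hl), Complex.real_smul]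

lemma fourierIntegral_const_smul (c : ℂ) (f : ℝ → ℂ) (ξ : ℝ) :
    FourierTransform.fourier (fun v => c • f v) ξ = c • FourierTransform.fourier f ξ := by
  rw [Real.fourier_real_eq_integral_exp_smul,
      Real.fourier_real_eq_integral_exp_smul]
  simp_rw [smul_comm _ c]
  exact integral_smul c _

lemma wavScale_one (w : ℝ → ℂ) : wavScale w 1 = w := by
  funext t
  simp [wavScale]

lemma fourier_wavScale (w : ℝ → ℂ) {l : ℝ} (hl : 0 < l) (ξ : ℝ) :
    FourierTransform.fourier (wavScale w l) ξ
      = ((l ^ ((1 : ℝ) / 2) : ℝ) : ℂ) * FourierTransform.fourier w (l * ξ) := by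
  have h1 : wavScale w l = fun v =>
      (((l ^ (-(1 / 2) : ℝ) : ℝ) : ℂ)) • (fun s => w (l⁻¹ * s)) v := by
    funext v
    simp [wavScale, div_eq_inv_mul, smul_eq_mul]
  rw [h1, fourierIntegral_const_smul, fourierIntegral_comp_mul w (inv_pos.mpr hl), inv_inv,
    smul_eq_mul, ← mul_assoc, ← Complex.ofReal_mul]
  have h2 : l ^ (-(1 / 2) : ℝ) * l ^ (1 : ℝ) = l ^ ((1 : ℝ) / 2) := by
    rw [← Real.rpow_add hl]; norm_num
  rw [Real.rpow_one] at h2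
  rw [h2]

/-- The key pointwise identity `g_λ(t) = λ⁻¹ g₁(t/λ)` (valid for every `t`). -/
lemma gFilter_pointwise (w : ℝ → ℂ) (μ : ℝ) {l : ℝ} (hl : 0 < l) (t : ℝ) :
    gFilter w μ l t = ((l⁻¹ : ℝ) : ℂ) * gFilter w μ 1 (t / l) := by
  set F₁ : ℝ → ℂ := fun ξ =>
    ((‖FourierTransform.fourier w ξ‖ ^ 2 / (‖FourierTransform.fourier w ξ‖ ^ 2 + μ) : ℝ) : ℂ) with hF₁
  have hG1 : (fun ξ : ℝ =>
      ((‖FourierTransform.fourier (wavScale w 1) ξ‖ ^ 2 /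
          (‖FourierTransform.fourier (wavScale w 1) ξ‖ ^ 2 + 1 * μ) : ℝ) : ℂ)) = F₁ := by
    funext ξ
    rw [wavScale_one, one_mul]
  have hFl : (fun ξ : ℝ =>
      ((‖FourierTransform.fourier (wavScale w l) ξ‖ ^ 2 /
          (‖FourierTransform.fourier (wavScale w l) ξ‖ ^ 2 + l * μ) : ℝ) : ℂ))
      = fun ξ : ℝ => F₁ (l * ξ) := by
    funext ξ
    have hnorm : ‖FourierTransform.fourier (wavScale w l) ξ‖ ^ 2
        = l * ‖FourierTransform.fourier w (l * ξ)‖ ^ 2 := by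
      rw [fourier_wavScale w hl ξ, norm_mul, Complex.norm_real, Real.norm_eq_abs,
        abs_of_nonneg (Real.rpow_nonneg hl.le _), mul_pow, ← Real.rpow_natCast (l ^ ((1:ℝ)/2)),
        ← Real.rpow_mul hl.le]
      norm_num
    rw [hF₁]
    simp only [hnorm]
    rw [show l * ‖FourierTransform.fourier w (l * ξ)‖ ^ 2 + l * μ
        = l * (‖FourierTransform.fourier w (l * ξ)‖ ^ 2 + μ) by ring,
      mul_div_mul_left _ _ hl.ne']
  unfold gFilter
  rw [hG1, hFl, Real.fourierInv_eq_fourier_neg,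
    fourierIntegral_comp_mul F₁ hl, Real.fourierInv_eq_fourier_neg]
  congr 2
  field_simp

/-- Scaling of the squared `L²` norm under dilation of the variable. -/
lemma eLpNorm_sq_comp_div (f : ℝ → ℂ) {l : ℝ} (hl : 0 < l) :
    (eLpNorm (fun t => f (t / l)) 2 volume).toReal ^ 2
      = l * (eLpNorm f 2 volume).toReal ^ 2 := by
  have h2 : (2 : ℝ≥0∞) ≠ 0 := by norm_num
  have h2' : (2 : ℝ≥0∞) ≠ ∞ := by norm_num
  rw [eLpNorm_eq_lintegral_rpow_enorm_toReal h2 h2', eLpNorm_eq_lintegral_rpow_enorm_toReal h2 h2']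
  have hemb : MeasurableEmbedding (fun t : ℝ => l⁻¹ * t) :=
    (Homeomorph.mulLeft₀ l⁻¹ (inv_ne_zero hl.ne')).measurableEmbedding
  have hmap : Measure.map (fun t : ℝ => l⁻¹ * t) volume
      = ENNReal.ofReal l • (volume : Measure ℝ) := by
    rw [Real.map_volume_mul_left (inv_ne_zero hl.ne'), inv_inv, abs_of_pos hl]
  have hcv := hemb.lintegral_map (μ := volume)
    (fun s : ℝ => ‖f s‖ₑ ^ (2 : ℝ≥0∞).toReal)
  rw [hmap, lintegral_smul_measure] at hcv
  have key : (∫⁻ t, ‖f (t / l)‖ₑ ^ (2 : ℝ≥0∞).toReal)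
      = ENNReal.ofReal l * ∫⁻ t, ‖f t‖ₑ ^ (2 : ℝ≥0∞).toReal := by
    simp_rw [div_eq_inv_mul]
    exact hcv.symm
  rw [key, ENNReal.mul_rpow_of_nonneg _ _ (by positivity : (0:ℝ) ≤ 1 / (2 : ℝ≥0∞).toReal)]
  rw [ENNReal.toReal_mul, mul_pow]
  congr 1
  rw [← ENNReal.toReal_rpow, ENNReal.toReal_ofReal hl.le, ← Real.rpow_natCast _ 2,
    ← Real.rpow_mul hl.le]
  norm_num

lemma sqrt_of_sq_eq (u v c : ℝ) (hu : 0 ≤ u) (hv : 0 ≤ v) (hc : 0 ≤ c)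
    (h : u ^ 2 = c * v ^ 2) : u = Real.sqrt c * v := by
  rw [← Real.sqrt_sq hu, h, Real.sqrt_mul hc, Real.sqrt_sq hv]

/-- Let `w` be a nonzero real-valued Schwartz function on `ℝ`, `μ > 0`, and
for `λ > 0` let `w_λ(t) = λ^{−1/2} w(t/λ)` and `g_λ = 𝓕⁻¹(|𝓕w_λ|²/(|𝓕w_λ|² + λμ))`. Then
`g_λ(t) = λ⁻¹ g₁(t/λ)` for a.e. `t`, hence `‖g_λ‖² = λ⁻¹‖g₁‖²`,
`‖t·g_λ(t)‖² = λ‖t·g₁(t)‖²`, and the pulse width satisfies `l(g_λ) = λ·l(g₁)`. -/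
theorem gFilter_scaling
    (w : SchwartzMap ℝ ℂ) (hw_real : ∀ t, (w t).im = 0) (hw0 : w ≠ 0)
    (μ : ℝ) (hμ : 0 < μ) (l : ℝ) (hl : 0 < l) :
    (∀ᵐ t ∂(volume : Measure ℝ),
      gFilter (⇑w) μ l t = ((l⁻¹ : ℝ) : ℂ) * gFilter (⇑w) μ 1 (t / l)) ∧
    (eLpNorm (gFilter (⇑w) μ l) 2 volume).toReal ^ 2 =
      l⁻¹ * (eLpNorm (gFilter (⇑w) μ 1) 2 volume).toReal ^ 2 ∧
    (eLpNorm (fun t : ℝ => (t : ℂ) * gFilter (⇑w) μ l t) 2 volume).toReal ^ 2 =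
      l * (eLpNorm (fun t : ℝ => (t : ℂ) * gFilter (⇑w) μ 1 t) 2 volume).toReal ^ 2 ∧
    (eLpNorm (fun t : ℝ => (t : ℂ) * gFilter (⇑w) μ l t) 2 volume).toReal /
        (eLpNorm (gFilter (⇑w) μ l) 2 volume).toReal =
      l * ((eLpNorm (fun t : ℝ => (t : ℂ) * gFilter (⇑w) μ 1 t) 2 volume).toReal /
        (eLpNorm (gFilter (⇑w) μ 1) 2 volume).toReal) := by
  have hpt : ∀ t : ℝ, gFilter (⇑w) μ l t = ((l⁻¹ : ℝ) : ℂ) * gFilter (⇑w) μ 1 (t / l) :=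
    gFilter_pointwise (⇑w) μ hl
  have hnorm2 : (eLpNorm (gFilter (⇑w) μ l) 2 volume).toReal ^ 2 =
      l⁻¹ * (eLpNorm (gFilter (⇑w) μ 1) 2 volume).toReal ^ 2 := by
    have hfun : gFilter (⇑w) μ l
        = ((l⁻¹ : ℝ) : ℂ) • fun t => gFilter (⇑w) μ 1 (t / l) := by
      funext t
      rw [hpt t]
      rfl
    rw [hfun, eLpNorm_const_smul, ENNReal.toReal_mul, mul_pow,
      eLpNorm_sq_comp_div (gFilter (⇑w) μ 1) hl]
    have hc : (‖((l⁻¹ : ℝ) : ℂ)‖ₑ).toReal = l⁻¹ := by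
      rw [toReal_enorm, Complex.norm_real, Real.norm_eq_abs,
        abs_of_pos (inv_pos.mpr hl)]
    rw [hc, ← mul_assoc,
      show l⁻¹ ^ 2 * l = l⁻¹ by rw [sq, mul_assoc, inv_mul_cancel₀ hl.ne', mul_one]]
  have hw2 : (eLpNorm (fun t : ℝ => (t : ℂ) * gFilter (⇑w) μ l t) 2 volume).toReal ^ 2 =
      l * (eLpNorm (fun t : ℝ => (t : ℂ) * gFilter (⇑w) μ 1 t) 2 volume).toReal ^ 2 := by
    have hfun : (fun t : ℝ => (t : ℂ) * gFilter (⇑w) μ l t)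
        = fun t : ℝ => (fun s : ℝ => (s : ℂ) * gFilter (⇑w) μ 1 s) (t / l) := by
      funext t
      rw [hpt t]
      simp only
      push_cast [hl.ne']
      ring
    rw [hfun]
    exact eLpNorm_sq_comp_div (fun s : ℝ => (s : ℂ) * gFilter (⇑w) μ 1 s) hl
  refine ⟨Filter.Eventually.of_forall hpt, hnorm2, hw2, ?_⟩
  have hxv := sqrt_of_sq_eq _ _ l ENNReal.toReal_nonneg ENNReal.toReal_nonneg hl.le hw2
  have hyv := sqrt_of_sq_eq _ _ l⁻¹ ENNReal.toReal_nonneg ENNReal.toReal_nonneg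
    (inv_nonneg.mpr hl.le) hnorm2
  rw [hxv, hyv, Real.sqrt_inv, mul_div_mul_comm, div_eq_mul_inv, inv_inv,
    Real.mul_self_sqrt hl.le]
end

section
/- Let U, V, D be complex Hilbert spaces, S : U → D a bounded linear operator that is coercive (there exists C_* > 0 with C_*‖u‖ ≤ ‖Su‖ for all u ∈ U), T : U → V a bounded linear operator, and d ∈ D. For α ≥ 0 define J_α(u) = (1/2)(‖Su − d‖²_D + α²‖Tu‖²_V), let u_α ∈ U be the unique solution of the normal equation (S*S + α²T*T)u_α = S*d, and set J̃_α = J_α(u_α), which is the minimum of J_α over U. Then lim_{α → 0⁺} (J̃_α − J̃_0)/α² = (1/2)‖Tu_0‖²_V. -/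
open ContinuousLinearMap Filter Topology RCLike

section Aux

variable {U V D : Type*}
    [NormedAddCommGroup U] [InnerProductSpace ℂ U] [CompleteSpace U]
    [NormedAddCommGroup V] [InnerProductSpace ℂ V] [CompleteSpace V]
    [NormedAddCommGroup D] [InnerProductSpace ℂ D] [CompleteSpace D]

local notation "⟪" x ", " y "⟫" => @inner ℂ _ _ x y

/-- Cross term vanishes at a solution of the normal equation. -/
lemma cross_zero (S : U →L[ℂ] D) (T : U →L[ℂ] V) (d : D) (α : ℝ) (e w : U)
    (h : (adjoint S) (S e) + (α ^ 2) • (adjoint T) (T e) = (adjoint S) d) :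
    re ⟪S e - d, S w⟫ + α ^ 2 * re ⟪T e, T w⟫ = 0 := by
  have h1 : ⟪S e - d, S w⟫ = ⟪(adjoint S) (S e - d), w⟫ := (adjoint_inner_left S w _).symm
  have h2 : ⟪T e, T w⟫ = ⟪(adjoint T) (T e), w⟫ := (adjoint_inner_left T w _).symm
  have hz : (adjoint S) (S e - d) + ((α:ℝ) ^ 2) • (adjoint T) (T e) = 0 := by
    rw [map_sub]; rw [← h]; abel
  have key : ⟪S e - d, S w⟫ + (((α^2 : ℝ)) : ℂ) * ⟪T e, T w⟫ = 0 := by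
    rw [h1, h2]
    have : (((α^2 : ℝ)) : ℂ) * ⟪(adjoint T) (T e), w⟫
        = ⟪((α:ℝ)^2 : ℝ) • (adjoint T) (T e), w⟫ := by
      rw [real_smul_eq_coe_smul (K := ℂ), inner_smul_left]
      push_cast
      simp [Complex.conj_ofReal]
    rw [this, ← inner_add_left, hz, inner_zero_left]
  have h := congrArg Complex.re key
  simp only [Complex.add_re, Complex.mul_re, Complex.ofReal_re, Complex.ofReal_im,
    zero_mul, sub_zero, Complex.zero_re] at h
  simpa only [re_to_complex] using h

/-- Key expansion identity. -/
lemma expand (S : U →L[ℂ] D) (T : U →L[ℂ] V) (d : D) (α : ℝ) (e w : U)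
    (h : (adjoint S) (S e) + (α ^ 2) • (adjoint T) (T e) = (adjoint S) d) :
    ‖S (e + w) - d‖ ^ 2 + α ^ 2 * ‖T (e + w)‖ ^ 2
      = (‖S e - d‖ ^ 2 + α ^ 2 * ‖T e‖ ^ 2) + (‖S w‖ ^ 2 + α ^ 2 * ‖T w‖ ^ 2) := by
  have e1 : S (e + w) - d = (S e - d) + S w := by rw [map_add]; abel
  have e2 : T (e + w) = T e + T w := map_add T e w
  have n1 : ‖S (e + w) - d‖ ^ 2
      = ‖S e - d‖ ^ 2 + 2 * re ⟪S e - d, S w⟫ + ‖S w‖ ^ 2 := by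
    rw [e1]; exact norm_add_sq _ _
  have n2 : ‖T (e + w)‖ ^ 2 = ‖T e‖ ^ 2 + 2 * re ⟪T e, T w⟫ + ‖T w‖ ^ 2 := by
    rw [e2]; exact norm_add_sq _ _
  have hc := cross_zero S T d α e w h
  rw [n1, n2]; nlinarith [hc]

end Aux

set_option maxHeartbeats 1000000 in
/-- Let `U, V, D` be complex Hilbert spaces, `S : U → D` bounded and
coercive (`C_*‖u‖ ≤ ‖S u‖` for some `C_* > 0`), `T : U → V` bounded, `d ∈ D`. For `α ≥ 0`
let `u_α` solve the normal equation `(S*S + α²T*T)u_α = S*d`, and let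
`J̃_α = (1/2)(‖S u_α − d‖² + α²‖T u_α‖²)` be the minimum of the penalized functional. Then
`lim_{α → 0⁺} (J̃_α − J̃_0)/α² = (1/2)‖T u_0‖²`. -/
theorem penalty_limit_of_tikhonov_homotopy
    {U V D : Type*}
    [NormedAddCommGroup U] [InnerProductSpace ℂ U] [CompleteSpace U]
    [NormedAddCommGroup V] [InnerProductSpace ℂ V] [CompleteSpace V]
    [NormedAddCommGroup D] [InnerProductSpace ℂ D] [CompleteSpace D]
    (S : U →L[ℂ] D) (T : U →L[ℂ] V) (d : D)
    (Cstar : ℝ) (hCstar : 0 < Cstar) (hcoercive : ∀ x : U, Cstar * ‖x‖ ≤ ‖S x‖)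
    (u : ℝ → U)
    (hu : ∀ α : ℝ, (adjoint S) (S (u α)) + (α ^ 2) • (adjoint T) (T (u α)) =
      (adjoint S) d) :
    Tendsto
      (fun α : ℝ =>
        ((1 / 2) * (‖S (u α) - d‖ ^ 2 + α ^ 2 * ‖T (u α)‖ ^ 2)
          - (1 / 2) * ‖S (u 0) - d‖ ^ 2) / α ^ 2)
      (nhdsWithin 0 (Set.Ioi 0)) (nhds ((1 / 2) * ‖T (u 0)‖ ^ 2)) := by
  -- Step 1: u α → u 0 as α → 0⁺ via the bound ‖u α - u 0‖ ≤ α² K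
  set K : ℝ := ‖(adjoint T) (T (u 0))‖ / Cstar ^ 2 with hK
  have hbound : ∀ α : ℝ, ‖u α - u 0‖ ≤ α ^ 2 * K := by
    intro α
    set w := u α - u 0 with hw
    -- S*S w + α² T*T w = -α² T*T (u 0)
    have heq : (adjoint S) (S w) + (α ^ 2) • (adjoint T) (T w)
        = -((α ^ 2) • (adjoint T) (T (u 0))) := by
      have h1 := hu α
      have h2 := hu 0
      simp only [pow_two, mul_zero, zero_smul, add_zero] at h2
      have : (adjoint S) (S w) = (adjoint S) (S (u α)) - (adjoint S) (S (u 0)) := by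
        simp [hw, map_sub]
      rw [this, h2]
      have hT : (adjoint T) (T w) = (adjoint T) (T (u α)) - (adjoint T) (T (u 0)) := by
        simp [hw, map_sub]
      rw [hT, smul_sub]
      have := h1
      rw [← this]; abel
    -- take inner product with w
    have hinner : re (inner ℂ ((adjoint S) (S w) + (α ^ 2) • (adjoint T) (T w)) w : ℂ)
        = ‖S w‖ ^ 2 + α ^ 2 * ‖T w‖ ^ 2 := by
      have hs : (inner ℂ ((adjoint S) (S w)) w : ℂ) = inner ℂ (S w) (S w) :=
        adjoint_inner_left S w _
      have ht2 : (inner ℂ ((α ^ 2 : ℝ) • (adjoint T) (T w)) w : ℂ)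
          = ((α ^ 2 : ℝ) : ℂ) * inner ℂ (T w) (T w) := by
        rw [real_smul_eq_coe_smul (K := ℂ), inner_smul_left, adjoint_inner_left]
        simp [Complex.conj_ofReal]
      have nS : (inner ℂ (S w) (S w) : ℂ).re = ‖S w‖ ^ 2 := by
        simpa using inner_self_eq_norm_sq (𝕜 := ℂ) (S w)
      have nT : (inner ℂ (T w) (T w) : ℂ).re = ‖T w‖ ^ 2 := by
        simpa using inner_self_eq_norm_sq (𝕜 := ℂ) (T w)
      rw [inner_add_left, map_add, hs, ht2]
      simp only [re_to_complex, Complex.mul_re, Complex.ofReal_re, Complex.ofReal_im,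
        zero_mul, sub_zero, nS, nT]
    have hrhs : re (inner ℂ (-((α ^ 2 : ℝ) • (adjoint T) (T (u 0)))) w : ℂ)
        ≤ α ^ 2 * ‖(adjoint T) (T (u 0))‖ * ‖w‖ := by
      calc re (inner ℂ (-((α ^ 2 : ℝ) • (adjoint T) (T (u 0)))) w : ℂ)
          ≤ ‖(inner ℂ (-((α ^ 2 : ℝ) • (adjoint T) (T (u 0)))) w : ℂ)‖ := re_le_norm _
        _ ≤ ‖-((α ^ 2 : ℝ) • (adjoint T) (T (u 0)))‖ * ‖w‖ := norm_inner_le_norm _ _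
        _ = α ^ 2 * ‖(adjoint T) (T (u 0))‖ * ‖w‖ := by
            rw [norm_neg, norm_smul]
            simp [abs_of_nonneg (sq_nonneg α), mul_assoc]
    have hmain : Cstar ^ 2 * ‖w‖ ^ 2 ≤ α ^ 2 * ‖(adjoint T) (T (u 0))‖ * ‖w‖ := by
      have hSw2 : Cstar ^ 2 * ‖w‖ ^ 2 ≤ ‖S w‖ ^ 2 := by
        have h1 := pow_le_pow_left₀ (mul_nonneg hCstar.le (norm_nonneg w)) (hcoercive w) 2
        calc Cstar ^ 2 * ‖w‖ ^ 2 = (Cstar * ‖w‖) ^ 2 := by ring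
          _ ≤ ‖S w‖ ^ 2 := h1
      calc Cstar ^ 2 * ‖w‖ ^ 2 ≤ ‖S w‖ ^ 2 := hSw2
        _ ≤ ‖S w‖ ^ 2 + α ^ 2 * ‖T w‖ ^ 2 := by nlinarith [norm_nonneg (T w), sq_nonneg α]
        _ = re (inner ℂ ((adjoint S) (S w) + (α ^ 2) • (adjoint T) (T w)) w : ℂ) :=
            hinner.symm
        _ = re (inner ℂ (-((α ^ 2 : ℝ) • (adjoint T) (T (u 0)))) w : ℂ) := by rw [heq]
        _ ≤ α ^ 2 * ‖(adjoint T) (T (u 0))‖ * ‖w‖ := hrhs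
    rcases eq_or_lt_of_le (norm_nonneg w) with h0 | h0
    · rw [← h0, hK]
      positivity
    · have hC2 : (0:ℝ) < Cstar ^ 2 := by positivity
      have h1 : Cstar ^ 2 * ‖w‖ ≤ α ^ 2 * ‖(adjoint T) (T (u 0))‖ :=
        le_of_mul_le_mul_right (by nlinarith [hmain]) h0
      rw [hK, ← mul_div_assoc, le_div_iff₀ hC2]
      linarith
  have hu_tendsto : Tendsto u (nhdsWithin 0 (Set.Ioi 0)) (nhds (u 0)) := by
    rw [← tendsto_sub_nhds_zero_iff]
    apply squeeze_zero_norm (fun α => hbound α)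
    have : Tendsto (fun α : ℝ => α ^ 2 * K) (nhds 0) (nhds 0) := by
      have := (continuous_pow 2).tendsto (0:ℝ)
      simpa using (this.mul_const K)
    exact this.mono_left nhdsWithin_le_nhds
  -- Step 2: g α = (1/2)‖T (u α)‖² tends to (1/2)‖T (u 0)‖²
  have hg : Tendsto (fun α : ℝ => (1/2) * ‖T (u α)‖ ^ 2) (nhdsWithin 0 (Set.Ioi 0))
      (nhds ((1/2) * ‖T (u 0)‖ ^ 2)) := by
    have hc : Continuous fun x : U => (1/2 : ℝ) * ‖T x‖ ^ 2 :=
      continuous_const.mul (T.continuous.norm.pow 2)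
    exact (hc.tendsto (u 0)).comp hu_tendsto
  -- Step 3: squeeze
  apply tendsto_of_tendsto_of_tendsto_of_le_of_le' hg tendsto_const_nhds
  · -- lower bound eventually
    filter_upwards [self_mem_nhdsWithin] with α (hα : α ∈ Set.Ioi 0)
    have hα2 : (0:ℝ) < α ^ 2 := pow_pos hα 2
    -- J_0 minimality: ‖S u0 - d‖² ≤ ‖S uα - d‖²
    have hmin0 : ‖S (u 0) - d‖ ^ 2 ≤ ‖S (u α) - d‖ ^ 2 := by
      have h0 := hu 0
      have := expand S T d 0 (u 0) (u α - u 0) h0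
      simp only [add_sub_cancel] at this
      linarith [this, sq_nonneg ‖S (u α - u 0)‖]
    rw [le_div_iff₀ hα2]
    linarith [hmin0]
  · -- upper bound eventually
    filter_upwards [self_mem_nhdsWithin] with α (hα : α ∈ Set.Ioi 0)
    have hα2 : (0:ℝ) < α ^ 2 := pow_pos hα 2
    have hup : ‖S (u α) - d‖ ^ 2 + α ^ 2 * ‖T (u α)‖ ^ 2
        ≤ ‖S (u 0) - d‖ ^ 2 + α ^ 2 * ‖T (u 0)‖ ^ 2 := by
      have := expand S T d α (u α) (u 0 - u α) (hu α)
      simp only [add_sub_cancel] at this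
      linarith [this, sq_nonneg ‖S (u 0 - u α)‖,
        mul_nonneg (sq_nonneg α) (sq_nonneg ‖T (u 0 - u α)‖)]
    rw [div_le_iff₀ hα2]
    linarith [hup]
end

section
/- Let U, V, D be complex Hilbert spaces, S : U → D bounded and coercive with C_*‖u‖ ≤ ‖Su‖ for all u ∈ U, T : U → V bounded, d ∈ D, and for α ≥ 0 let u_α = (S*S + α²T*T)⁻¹S*d. Then u_α = u_0 − α² v_α, where v_α = (S*S + α²T*T)⁻¹ T*T u_0 satisfies the uniform bound ‖v_α‖ ≤ C_*^{−2}‖T‖²‖u_0‖ for all α ≥ 0; in particular ‖u_α − u_0‖ ≤ α² C_*^{−2}‖T‖²‖u_0‖. -/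
open ContinuousLinearMap

open scoped InnerProductSpace

lemma surj_of_coercive' {U : Type*} [NormedAddCommGroup U] [InnerProductSpace ℂ U]
    [CompleteSpace U] (A : U →L[ℂ] U) (c : ℝ) (hc : 0 < c)
    (h : ∀ x : U, c * ‖x‖ ^ 2 ≤ (⟪A x, x⟫_ℂ).re) : Function.Surjective A := by
  have hnorm : ∀ x : U, c * ‖x‖ ≤ ‖A x‖ := by
    intro x
    rcases eq_or_ne x 0 with rfl | hx
    · simp
    have h1 := h x
    have h2 : (⟪A x, x⟫_ℂ).re ≤ ‖A x‖ * ‖x‖ := by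
      calc (⟪A x, x⟫_ℂ).re ≤ ‖⟪A x, x⟫_ℂ‖ := Complex.re_le_norm _
        _ ≤ ‖A x‖ * ‖x‖ := norm_inner_le_norm _ _
    have hx' : 0 < ‖x‖ := norm_pos_iff.mpr hx
    nlinarith
  have hanti : AntilipschitzWith ⟨c⁻¹, by positivity⟩ A := by
    apply ContinuousLinearMap.antilipschitz_of_bound
    intro x
    change ‖x‖ ≤ c⁻¹ * ‖A x‖
    rw [← div_eq_inv_mul, le_div_iff₀ hc, mul_comm]
    exact hnorm x
  have hclosed : IsClosed (Set.range A) := hanti.isClosed_range A.uniformContinuous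
  set K := LinearMap.range (A : U →ₗ[ℂ] U) with hK
  have hKset : (K : Set U) = Set.range A := rfl
  haveI : CompleteSpace K := (hKset ▸ hclosed).completeSpace_coe
  have horth : Kᗮ = ⊥ := by
    rw [Submodule.eq_bot_iff]
    intro y hy
    have h0 : ⟪A y, y⟫_ℂ = 0 :=
      (Submodule.mem_orthogonal K y).mp hy (A y) (LinearMap.mem_range_self _ y)
    have hle := h y
    rw [h0] at hle
    simp only [Complex.zero_re] at hle
    by_contra hne
    have hpos : 0 < ‖y‖ := norm_pos_iff.mpr hne
    nlinarith [mul_pos hc (pow_pos hpos 2)]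
  have : K = ⊤ := Submodule.orthogonal_eq_bot_iff.mp horth
  exact LinearMap.range_eq_top.mp this

set_option maxHeartbeats 1000000 in
/-- Let `U, V, D` be complex Hilbert spaces, `S : U → D` bounded and
coercive with `C_*‖u‖ ≤ ‖S u‖`, `T : U → V` bounded, `d ∈ D`, and for `α ≥ 0` let `u_α`
solve `(S*S + α²T*T)u_α = S*d`. Then `u_α = u_0 − α² v_α`, where `v_α` is the unique solution
of `(S*S + α²T*T)v_α = T*T u_0` and satisfies `‖v_α‖ ≤ C_*⁻²‖T‖²‖u_0‖`; in particular
`‖u_α − u_0‖ ≤ α² C_*⁻²‖T‖²‖u_0‖`. -/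
theorem penalty_minimizer_first_order_expansion
    {U V D : Type*}
    [NormedAddCommGroup U] [InnerProductSpace ℂ U] [CompleteSpace U]
    [NormedAddCommGroup V] [InnerProductSpace ℂ V] [CompleteSpace V]
    [NormedAddCommGroup D] [InnerProductSpace ℂ D] [CompleteSpace D]
    (S : U →L[ℂ] D) (T : U →L[ℂ] V) (d : D)
    (Cstar : ℝ) (hCstar : 0 < Cstar) (hcoercive : ∀ x : U, Cstar * ‖x‖ ≤ ‖S x‖)
    (u : ℝ → U)
    (hu : ∀ α : ℝ, (adjoint S) (S (u α)) + (α ^ 2) • (adjoint T) (T (u α)) =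
      (adjoint S) d) :
    ∀ α : ℝ, 0 ≤ α →
      ∃ v : U,
        ((adjoint S) (S v) + (α ^ 2) • (adjoint T) (T v) = (adjoint T) (T (u 0))) ∧
        (∀ v' : U,
          (adjoint S) (S v') + (α ^ 2) • (adjoint T) (T v') = (adjoint T) (T (u 0)) →
          v' = v) ∧
        u α = u 0 - (α ^ 2) • v ∧
        ‖v‖ ≤ Cstar⁻¹ ^ 2 * ‖T‖ ^ 2 * ‖u 0‖ ∧
        ‖u α - u 0‖ ≤ α ^ 2 * (Cstar⁻¹ ^ 2 * ‖T‖ ^ 2 * ‖u 0‖) := by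
  intro α hα
  set A : U →L[ℂ] U :=
    (adjoint S).comp S + ((α : ℂ) ^ 2) • ((adjoint T).comp T) with hA
  have hAapp : ∀ x : U, A x = (adjoint S) (S x) + (α ^ 2) • (adjoint T) (T x) := by
    intro x
    rw [hA]
    simp only [ContinuousLinearMap.add_apply, ContinuousLinearMap.smul_apply,
      ContinuousLinearMap.comp_apply]
    rw [show ((α : ℂ) ^ 2) = ((α ^ 2 : ℝ) : ℂ) by push_cast; ring, Complex.coe_smul]
  -- coercivity
  have hcoer : ∀ x : U, Cstar ^ 2 * ‖x‖ ^ 2 ≤ (⟪A x, x⟫_ℂ).re := by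
    intro x
    have hip : ⟪A x, x⟫_ℂ = ((‖S x‖ ^ 2 + α ^ 2 * ‖T x‖ ^ 2 : ℝ) : ℂ) := by
      simp only [hA, ContinuousLinearMap.add_apply, ContinuousLinearMap.smul_apply,
        ContinuousLinearMap.comp_apply, inner_add_left, inner_smul_left,
        adjoint_inner_left]
      rw [inner_self_eq_norm_sq_to_K, inner_self_eq_norm_sq_to_K,
        ← Complex.ofReal_pow, Complex.conj_ofReal]
      push_cast
      ring_nf
      exact add_comm _ _
    rw [hip, Complex.ofReal_re]
    have h1 : Cstar ^ 2 * ‖x‖ ^ 2 ≤ ‖S x‖ ^ 2 := by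
      have h := pow_le_pow_left₀ (by positivity : (0:ℝ) ≤ Cstar * ‖x‖) (hcoercive x) 2
      rw [mul_pow] at h
      exact h
    nlinarith [sq_nonneg α, sq_nonneg ‖T x‖, mul_nonneg (sq_nonneg α) (sq_nonneg ‖T x‖)]
  have hc2 : (0:ℝ) < Cstar ^ 2 := by positivity
  -- norm bound / injectivity
  have hnorm : ∀ x : U, Cstar ^ 2 * ‖x‖ ≤ ‖A x‖ := by
    intro x
    rcases eq_or_ne x 0 with rfl | hx
    · simp
    have h1 := hcoer x
    have h2 : (⟪A x, x⟫_ℂ).re ≤ ‖A x‖ * ‖x‖ := by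
      calc (⟪A x, x⟫_ℂ).re ≤ ‖⟪A x, x⟫_ℂ‖ := Complex.re_le_norm _
        _ ≤ ‖A x‖ * ‖x‖ := norm_inner_le_norm _ _
    have hx' : 0 < ‖x‖ := norm_pos_iff.mpr hx
    nlinarith
  have hinj : Function.Injective A := by
    intro x y hxy
    have h1 : Cstar ^ 2 * ‖x - y‖ ≤ ‖A (x - y)‖ := hnorm _
    rw [map_sub, hxy, sub_self, norm_zero] at h1
    have h2 : ‖x - y‖ ≤ 0 := by nlinarith [norm_nonneg (x - y)]
    have h3 := le_antisymm h2 (norm_nonneg _)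
    rwa [norm_eq_zero, sub_eq_zero] at h3
  -- existence of v
  obtain ⟨v, hv⟩ := surj_of_coercive' A (Cstar ^ 2) hc2 hcoer ((adjoint T) (T (u 0)))
  have hveq : (adjoint S) (S v) + (α ^ 2) • (adjoint T) (T v) = (adjoint T) (T (u 0)) := by
    rw [← hAapp]; exact hv
  -- u α = u 0 - α² v
  have h0 : (adjoint S) (S (u 0)) = (adjoint S) d := by simpa using hu 0
  have hueq : u α = u 0 - (α ^ 2) • v := by
    apply hinj
    calc A (u α) = (adjoint S) d := by rw [hAapp, hu α]
      _ = A (u 0) - (α ^ 2) • A v := by rw [hv, hAapp, ← h0]; abel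
      _ = A (u 0 - (α ^ 2) • v) := by
          rw [map_sub, ContinuousLinearMap.map_smul_of_tower]
  -- norm bound on v
  have hvbound : ‖v‖ ≤ Cstar⁻¹ ^ 2 * ‖T‖ ^ 2 * ‖u 0‖ := by
    rcases eq_or_ne v 0 with rfl | hvne
    · simp
      positivity
    have h2 : (⟪A v, v⟫_ℂ).re ≤ ‖(adjoint T) (T (u 0))‖ * ‖v‖ := by
      rw [hv]
      calc (⟪(adjoint T) (T (u 0)), v⟫_ℂ).re ≤ ‖⟪(adjoint T) (T (u 0)), v⟫_ℂ‖ :=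
            Complex.re_le_norm _
        _ ≤ ‖(adjoint T) (T (u 0))‖ * ‖v‖ := norm_inner_le_norm _ _
    have h3 : ‖(adjoint T) (T (u 0))‖ ≤ ‖T‖ ^ 2 * ‖u 0‖ := by
      calc ‖(adjoint T) (T (u 0))‖ ≤ ‖adjoint T‖ * ‖T (u 0)‖ := le_opNorm _ _
        _ ≤ ‖adjoint T‖ * (‖T‖ * ‖u 0‖) := by gcongr; exact le_opNorm _ _
        _ = ‖T‖ ^ 2 * ‖u 0‖ := by rw [LinearIsometryEquiv.norm_map]; ring
    have hvpos : 0 < ‖v‖ := norm_pos_iff.mpr hvne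
    have hb : Cstar ^ 2 * ‖v‖ ≤ ‖T‖ ^ 2 * ‖u 0‖ := by
      have h1 := hcoer v
      have := le_trans h2 (mul_le_mul_of_nonneg_right h3 (norm_nonneg v))
      nlinarith
    rw [show Cstar⁻¹ ^ 2 * ‖T‖ ^ 2 * ‖u 0‖ = ‖T‖ ^ 2 * ‖u 0‖ / Cstar ^ 2 by
      field_simp, le_div_iff₀ hc2]
    nlinarith
  refine ⟨v, hveq, ?_, hueq, hvbound, ?_⟩
  · intro v' hv'
    apply hinj
    rw [hv, hAapp, hv']
  · have hd : u α - u 0 = -((α ^ 2) • v) := by rw [hueq]; abel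
    rw [hd, norm_neg, norm_smul, Real.norm_eq_abs, abs_of_nonneg (sq_nonneg α)]
    exact mul_le_mul_of_nonneg_left hvbound (sq_nonneg α)
end

section
/- Let U, V, D be complex Hilbert spaces, S : U → D bounded and coercive with C_*‖u‖ ≤ ‖Su‖ for all u ∈ U, T : U → V bounded, d ∈ D; for α ≥ 0 let u_α = (S*S + α²T*T)⁻¹S*d, J_α(u) = (1/2)(‖Su − d‖² + α²‖Tu‖²), and J̃_α = J_α(u_α). Then there exists a constant C ≥ 0, depending only on ‖S‖, ‖T‖, C_*, and ‖u_0‖, such that for all α ∈ (0, 1], | J̃_α − J̃_0 − (α²/2)‖Tu_0‖² | ≤ C α⁴. -/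
open ContinuousLinearMap

private lemma penalty_aux (a b c x y Bv α : ℝ) (hα : 0 < α) (hα1 : α ≤ 1)
    (hx0 : 0 ≤ x) (hy0 : 0 ≤ y) (hc : 0 ≤ c)
    (hx : x ≤ a * α^2) (hy : y ≤ c * α^2) (hB : |Bv| ≤ b * α^2) :
    |(1/2)*x^2 + α^2*Bv + (α^2/2)*y^2| ≤ ((1/2)*a^2 + b + (1/2)*c^2) * α^4 := by
  have hα2 : α^2 ≤ 1 := by nlinarith
  have hBB := abs_le.mp hB
  have hx2 : x^2 ≤ a^2 * α^4 := by nlinarith [mul_self_le_mul_self hx0 hx]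
  have hy2 : y^2 ≤ c^2 * α^4 := by nlinarith [mul_self_le_mul_self hy0 hy]
  have h4 : (0:ℝ) ≤ α^4 := by positivity
  rw [abs_le]
  constructor
  · nlinarith [sq_nonneg x, sq_nonneg y, sq_nonneg α,
      mul_nonneg (sq_nonneg a) h4, mul_nonneg (sq_nonneg c) h4,
      mul_le_mul_of_nonneg_left hBB.1 (sq_nonneg α)]
  · nlinarith [sq_nonneg x, sq_nonneg y, sq_nonneg α,
      mul_le_mul_of_nonneg_left hy2 (sq_nonneg α),
      mul_nonneg (sub_nonneg.mpr hα2) (mul_nonneg (sq_nonneg c) h4),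
      mul_le_mul_of_nonneg_left hBB.2 (sq_nonneg α)]

set_option maxHeartbeats 1000000 in
theorem penalty_value_quadratic_expansion
    {U V D : Type*}
    [NormedAddCommGroup U] [InnerProductSpace ℂ U] [CompleteSpace U]
    [NormedAddCommGroup V] [InnerProductSpace ℂ V] [CompleteSpace V]
    [NormedAddCommGroup D] [InnerProductSpace ℂ D] [CompleteSpace D]
    (S : U →L[ℂ] D) (T : U →L[ℂ] V) (d : D)
    (Cstar : ℝ) (hCstar : 0 < Cstar) (hcoercive : ∀ x : U, Cstar * ‖x‖ ≤ ‖S x‖)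
    (u : ℝ → U)
    (hu : ∀ α : ℝ, (adjoint S) (S (u α)) + (α ^ 2) • (adjoint T) (T (u α)) =
      (adjoint S) d) :
    ∃ C : ℝ, 0 ≤ C ∧ ∀ α : ℝ, 0 < α → α ≤ 1 →
      |(1 / 2) * (‖S (u α) - d‖ ^ 2 + α ^ 2 * ‖T (u α)‖ ^ 2)
          - (1 / 2) * ‖S (u 0) - d‖ ^ 2
          - (α ^ 2 / 2) * ‖T (u 0)‖ ^ 2| ≤ C * α ^ 4 := by
  have h0 : adjoint S (S (u 0)) = adjoint S d := by
    have h := hu 0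
    simpa using h
  obtain ⟨M, hMdef⟩ : ∃ M : ℝ, M = ‖S‖ * ‖u 0‖ / Cstar := ⟨_, rfl⟩
  have hMnn : 0 ≤ M := by rw [hMdef]; positivity
  obtain ⟨K, hKdef⟩ : ∃ K : ℝ, K = ‖T‖ ^ 2 * M / Cstar ^ 2 := ⟨_, rfl⟩
  have hKnn : 0 ≤ K := by rw [hKdef, hMdef]; positivity
  have hCnn : (0:ℝ) ≤ (1/2) * (‖S‖ * K)^2 + ‖T‖^2 * ‖u 0‖ * K + (1/2) * (‖T‖ * K)^2 := by
    have h1 : (0:ℝ) ≤ ‖T‖^2 * ‖u 0‖ * K :=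
      mul_nonneg (mul_nonneg (by positivity) (norm_nonneg _)) hKnn
    nlinarith [sq_nonneg (‖S‖ * K), sq_nonneg (‖T‖ * K)]
  refine ⟨(1/2) * (‖S‖ * K)^2 + ‖T‖^2 * ‖u 0‖ * K + (1/2) * (‖T‖ * K)^2, hCnn, ?_⟩
  intro α hαpos hα1
  -- bound on ‖u α‖
  have key : (inner ℂ (S (u α)) (S (u α)) : ℂ) + (α : ℂ)^2 * (inner ℂ (T (u α)) (T (u α)) : ℂ)
      = inner ℂ (S (u 0)) (S (u α)) := by
    have h := congrArg (fun w : U => (inner ℂ w (u α) : ℂ)) (hu α)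
    rw [← h0] at h
    simpa [inner_add_left, adjoint_inner_left, RCLike.real_smul_eq_coe_smul (K := ℂ),
      inner_smul_left, map_pow, Complex.conj_ofReal, mul_comm] using h
  have hselfS : (inner ℂ (S (u α)) (S (u α)) : ℂ).re = ‖S (u α)‖^2 := by
    simpa using inner_self_eq_norm_sq (𝕜 := ℂ) (S (u α))
  have hselfT : (inner ℂ (T (u α)) (T (u α)) : ℂ).re = ‖T (u α)‖^2 := by
    simpa using inner_self_eq_norm_sq (𝕜 := ℂ) (T (u α))
  have keyre : ‖S (u α)‖^2 + α^2 * ‖T (u α)‖^2 = (inner ℂ (S (u 0)) (S (u α)) : ℂ).re := by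
    have h := congrArg Complex.re key
    simp only [Complex.add_re, ← Complex.ofReal_pow, Complex.re_ofReal_mul] at h
    rw [hselfS, hselfT] at h
    exact h
  have hSa : ‖S (u α)‖^2 ≤ ‖S‖ * ‖u 0‖ * ‖S (u α)‖ := by
    have h1 : (inner ℂ (S (u 0)) (S (u α)) : ℂ).re ≤ ‖S (u 0)‖ * ‖S (u α)‖ := by
      simpa using re_inner_le_norm (𝕜 := ℂ) (S (u 0)) (S (u α))
    have h2 : ‖S (u 0)‖ ≤ ‖S‖ * ‖u 0‖ := S.le_opNorm _
    nlinarith [sq_nonneg (α * ‖T (u α)‖), norm_nonneg (S (u α)), norm_nonneg (u 0),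
      norm_nonneg S]
  have huα : ‖u α‖ ≤ M := by
    have hc := hcoercive (u α)
    have hs : ‖S (u α)‖ ≤ ‖S‖ * ‖u 0‖ := by
      rcases (norm_nonneg (S (u α))).eq_or_lt with hx | hx
      · rw [← hx]; positivity
      · refine le_of_mul_le_mul_right ?_ hx
        nlinarith [hSa]
    rw [hMdef, le_div_iff₀ hCstar]
    nlinarith
  -- the difference e
  set e : U := u α - u 0 with hedef
  have hsub : adjoint S (S e) = -((α^2 : ℝ) • adjoint T (T (u α))) := by
    have h := hu α
    rw [← h0] at h
    rw [hedef, map_sub, map_sub, ← h]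
    abel
  have key2 : (inner ℂ (S e) (S e) : ℂ) = -((α : ℂ)^2 * (inner ℂ (T (u α)) (T e) : ℂ)) := by
    have h := congrArg (fun w : U => (inner ℂ w e : ℂ)) hsub
    simpa [inner_neg_left, adjoint_inner_left, RCLike.real_smul_eq_coe_smul (K := ℂ),
      inner_smul_left, map_pow, Complex.conj_ofReal] using h
  have hselfSe : (inner ℂ (S e) (S e) : ℂ).re = ‖S e‖^2 := by
    simpa using inner_self_eq_norm_sq (𝕜 := ℂ) (S e)
  have key2re : ‖S e‖^2 = -(α^2 * (inner ℂ (T (u α)) (T e) : ℂ).re) := by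
    have h := congrArg Complex.re key2
    simp only [Complex.neg_re, ← Complex.ofReal_pow, Complex.re_ofReal_mul] at h
    rw [hselfSe] at h
    exact h
  have he : ‖e‖ ≤ K * α^2 := by
    have hc := hcoercive e
    have h1 : -((inner ℂ (T (u α)) (T e) : ℂ).re) ≤ ‖T (u α)‖ * ‖T e‖ := by
      have h := re_inner_le_norm (𝕜 := ℂ) (-(T (u α))) (T e)
      simpa [inner_neg_left, norm_neg] using h
    have h2 : ‖T (u α)‖ ≤ ‖T‖ * M := by
      calc ‖T (u α)‖ ≤ ‖T‖ * ‖u α‖ := T.le_opNorm _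
        _ ≤ ‖T‖ * M := mul_le_mul_of_nonneg_left huα (norm_nonneg T)
    have h3 : ‖T e‖ ≤ ‖T‖ * ‖e‖ := T.le_opNorm _
    have h4 : ‖S e‖^2 ≤ α^2 * ((‖T‖ * M) * (‖T‖ * ‖e‖)) := by
      calc ‖S e‖^2 = α^2 * (-((inner ℂ (T (u α)) (T e) : ℂ).re)) := by rw [key2re]; ring
        _ ≤ α^2 * (‖T (u α)‖ * ‖T e‖) := mul_le_mul_of_nonneg_left h1 (sq_nonneg α)
        _ ≤ α^2 * ((‖T‖ * M) * (‖T‖ * ‖e‖)) := by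
            refine mul_le_mul_of_nonneg_left ?_ (sq_nonneg α)
            exact mul_le_mul h2 h3 (norm_nonneg _) (by positivity)
    have h5 : Cstar^2 * ‖e‖^2 ≤ α^2 * (‖T‖^2 * M) * ‖e‖ := by
      nlinarith [norm_nonneg (S e), norm_nonneg e,
        mul_le_mul hc hc (by positivity) (norm_nonneg (S e))]
    have h6 : Cstar^2 * ‖e‖ ≤ α^2 * (‖T‖^2 * M) := by
      rcases (norm_nonneg e).eq_or_lt with hx | hx
      · rw [← hx, mul_zero]
        have : (0:ℝ) ≤ ‖T‖^2 * M := mul_nonneg (by positivity) hMnn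
        nlinarith [sq_nonneg α]
      · refine le_of_mul_le_mul_right ?_ hx
        nlinarith [h5]
    rw [hKdef, div_mul_eq_mul_div, le_div_iff₀ (by positivity : (0:ℝ) < Cstar^2)]
    nlinarith
  -- orthogonality
  have horth : (inner ℂ (S (u 0) - d) (S e) : ℂ) = 0 := by
    rw [← adjoint_inner_left, map_sub, h0, sub_self, inner_zero_left]
  -- norm expansions
  have hSdecomp : S (u α) - d = (S (u 0) - d) + S e := by
    rw [hedef, map_sub]; abel
  have hSexp : ‖S (u α) - d‖^2 = ‖S (u 0) - d‖^2 + ‖S e‖^2 := by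
    rw [hSdecomp, norm_add_sq (𝕜 := ℂ), horth]
    simp
  have hTdecomp : T (u α) = T (u 0) + T e := by
    rw [hedef, map_sub]; abel
  have hTexp : ‖T (u α)‖^2 = ‖T (u 0)‖^2 + 2 * (inner ℂ (T (u 0)) (T e) : ℂ).re + ‖T e‖^2 := by
    rw [hTdecomp]
    simpa using norm_add_sq (𝕜 := ℂ) (T (u 0)) (T e)
  set B : ℝ := (inner ℂ (T (u 0)) (T e) : ℂ).re with hBdef
  -- bounds for the three terms
  have hA : ‖S e‖ ≤ ‖S‖ * K * α^2 := by
    calc ‖S e‖ ≤ ‖S‖ * ‖e‖ := S.le_opNorm _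
      _ ≤ ‖S‖ * (K * α^2) := mul_le_mul_of_nonneg_left he (norm_nonneg S)
      _ = ‖S‖ * K * α^2 := by ring
  have hC : ‖T e‖ ≤ ‖T‖ * K * α^2 := by
    calc ‖T e‖ ≤ ‖T‖ * ‖e‖ := T.le_opNorm _
      _ ≤ ‖T‖ * (K * α^2) := mul_le_mul_of_nonneg_left he (norm_nonneg T)
      _ = ‖T‖ * K * α^2 := by ring
  have hB : |B| ≤ ‖T‖^2 * ‖u 0‖ * K * α^2 := by
    have h1 : |B| ≤ ‖(inner ℂ (T (u 0)) (T e) : ℂ)‖ := by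
      simpa using RCLike.abs_re_le_norm (inner ℂ (T (u 0)) (T e) : ℂ)
    have h2 : ‖(inner ℂ (T (u 0)) (T e) : ℂ)‖ ≤ ‖T (u 0)‖ * ‖T e‖ := norm_inner_le_norm _ _
    have h3 : ‖T (u 0)‖ ≤ ‖T‖ * ‖u 0‖ := T.le_opNorm _
    nlinarith [norm_nonneg T, norm_nonneg (u 0), norm_nonneg (T e), norm_nonneg (T (u 0)),
      mul_nonneg (mul_nonneg (norm_nonneg T) hKnn) (sq_nonneg α)]
  -- reduce the goal
  rw [hSexp, hTexp]
  have hgoal : (1 / 2) * ((‖S (u 0) - d‖^2 + ‖S e‖^2)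
        + α ^ 2 * (‖T (u 0)‖^2 + 2 * B + ‖T e‖^2))
      - (1 / 2) * ‖S (u 0) - d‖ ^ 2 - (α ^ 2 / 2) * ‖T (u 0)‖ ^ 2
      = (1/2) * ‖S e‖^2 + α^2 * B + (α^2/2) * ‖T e‖^2 := by ring
  rw [hgoal]
  exact penalty_aux (‖S‖ * K) (‖T‖^2 * ‖u 0‖ * K) (‖T‖ * K) (‖S e‖) (‖T e‖) B α
    hαpos hα1 (norm_nonneg _) (norm_nonneg _)
    (mul_nonneg (norm_nonneg T) hKnn) hA hC hB
end

section
/- Let D be a complex Hilbert space, S : L²(ℝ) → D a bounded linear operator, σ > 0, and d ∈ D. Let u_σ = (S*S + σI)⁻¹S*d be the Tikhonov minimizer of u ↦ ‖Su − d‖² + σ‖u‖², and assume t·u_σ(t) ∈ L²(ℝ). For ε > 0 let T_ε be the bounded operator on L²(ℝ) given by (T_ε u)(t) = t·u(t)/√(1 + ε²t²), and for α > 0, ε > 0 define J̃(α, ε) = min over u ∈ L²(ℝ) of ( ‖Su − d‖² + σ‖u‖² + α²‖T_ε u‖² ), and J̃(0) = ‖Su_σ − d‖² + σ‖u_σ‖².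 Then lim_{ε → 0⁺} lim_{α → 0⁺} α^{−2}( J̃(α, ε) − J̃(0) ) = ‖t·u_σ(t)‖²_{L²}. -/
open MeasureTheory ContinuousLinearMap Filter Topology
open scoped InnerProductSpace

/-- The smoothed multiplication-by-`t` operator `(T_ε u)(t) = t·u(t)/√(1 + ε²t²)`. -/
noncomputable def Teps (ε : ℝ) (u : ℝ → ℂ) : ℝ → ℂ :=
  fun t => ((t / Real.sqrt (1 + ε ^ 2 * t ^ 2) : ℝ) : ℂ) * u t

section Aux

lemma teps_sqrt_pos (ε t : ℝ) : 0 < Real.sqrt (1 + ε ^ 2 * t ^ 2) :=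
  Real.sqrt_pos.2 (by positivity)

lemma teps_mul_abs_le_abs (ε t : ℝ) : |t / Real.sqrt (1 + ε ^ 2 * t ^ 2)| ≤ |t| := by
  rw [abs_div, abs_of_pos (teps_sqrt_pos ε t)]
  refine div_le_self (abs_nonneg t) ?_
  exact (Real.le_sqrt' one_pos).2 (by nlinarith [sq_nonneg (ε * t)])

lemma teps_mul_abs_le_inv {ε : ℝ} (hε : 0 < ε) (t : ℝ) :
    |t / Real.sqrt (1 + ε ^ 2 * t ^ 2)| ≤ ε⁻¹ := by
  rw [abs_div, abs_of_pos (teps_sqrt_pos ε t), div_le_iff₀ (teps_sqrt_pos ε t)]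
  have h1 : ε * |t| ≤ Real.sqrt (1 + ε ^ 2 * t ^ 2) := by
    rw [Real.le_sqrt (by positivity) (by positivity)]
    nlinarith [sq_abs t]
  calc |t| = ε⁻¹ * (ε * |t|) := by field_simp
    _ ≤ ε⁻¹ * Real.sqrt (1 + ε ^ 2 * t ^ 2) :=
        mul_le_mul_of_nonneg_left h1 (by positivity)

lemma teps_norm_apply (ε : ℝ) (f : ℝ → ℂ) (t : ℝ) :
    ‖Teps ε f t‖ = |t / Real.sqrt (1 + ε ^ 2 * t ^ 2)| * ‖f t‖ := by
  calc ‖Teps ε f t‖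
      = ‖((t / Real.sqrt (1 + ε ^ 2 * t ^ 2) : ℝ) : ℂ)‖ * ‖f t‖ := norm_mul _ _
    _ = |t / Real.sqrt (1 + ε ^ 2 * t ^ 2)| * ‖f t‖ := by
        rw [Complex.norm_real, Real.norm_eq_abs]

lemma teps_norm_le_abs (ε : ℝ) (f : ℝ → ℂ) (t : ℝ) :
    ‖Teps ε f t‖ ≤ ‖(t : ℂ) * f t‖ := by
  rw [teps_norm_apply, norm_mul]
  have : ‖((t : ℝ) : ℂ)‖ = |t| := by simp [Complex.norm_real, Real.norm_eq_abs]
  rw [this]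
  exact mul_le_mul_of_nonneg_right (teps_mul_abs_le_abs ε t) (norm_nonneg _)

lemma teps_mult_cont (ε : ℝ) : Continuous fun t : ℝ =>
    ((t / Real.sqrt (1 + ε ^ 2 * t ^ 2) : ℝ) : ℂ) := by
  refine Complex.continuous_ofReal.comp ?_
  refine continuous_id.div (Real.continuous_sqrt.comp (by continuity)) ?_
  exact fun t => ne_of_gt (teps_sqrt_pos ε t)

lemma teps_memLp {ε : ℝ} (hε : 0 < ε) {f : ℝ → ℂ}
    (hf : MemLp f 2 (volume : Measure ℝ)) : MemLp (Teps ε f) 2 (volume : Measure ℝ) := by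
  refine ⟨((teps_mult_cont ε).aestronglyMeasurable).mul hf.1, ?_⟩
  have hle : eLpNorm (Teps ε f) 2 volume ≤ eLpNorm ((ε⁻¹ : ℝ) • f) 2 volume := by
    refine eLpNorm_mono fun t => ?_
    rw [teps_norm_apply]
    have : ‖((ε⁻¹ : ℝ) • f) t‖ = ε⁻¹ * ‖f t‖ := by
      rw [Pi.smul_apply, norm_smul, Real.norm_eq_abs, abs_of_pos (inv_pos.2 hε)]
    rw [this]
    exact mul_le_mul_of_nonneg_right (teps_mul_abs_le_inv hε t) (norm_nonneg _)
  refine lt_of_le_of_lt hle ?_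
  rw [eLpNorm_const_smul]
  exact ENNReal.mul_lt_top ENNReal.coe_lt_top hf.2

lemma teps_eLpNorm_le {ε : ℝ} (hε : 0 < ε) (f : ℝ → ℂ) :
    eLpNorm (Teps ε f) 2 (volume : Measure ℝ)
      ≤ (‖(ε⁻¹ : ℝ)‖₊ : ENNReal) * eLpNorm f 2 volume := by
  have hle : eLpNorm (Teps ε f) 2 volume ≤ eLpNorm ((ε⁻¹ : ℝ) • f) 2 volume := by
    refine eLpNorm_mono fun t => ?_
    rw [teps_norm_apply]
    have : ‖((ε⁻¹ : ℝ) • f) t‖ = ε⁻¹ * ‖f t‖ := by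
      rw [Pi.smul_apply, norm_smul, Real.norm_eq_abs, abs_of_pos (inv_pos.2 hε)]
    rw [this]
    exact mul_le_mul_of_nonneg_right (teps_mul_abs_le_inv hε t) (norm_nonneg _)
  exact hle.trans_eq (eLpNorm_const_smul _ _ _ _)

lemma penalty_sq_lower {M b n : ℝ} (hM : 0 ≤ M) (hb : 0 ≤ b) (hn : 0 ≤ n)
    (h1 : M ≤ n + b) : M ^ 2 - 2 * M * b ≤ n ^ 2 := by
  rcases le_total M b with h | h
  · nlinarith
  · nlinarith

lemma penalty_arith {σ εi α M r n sv : ℝ} (hσ : 0 < σ) (hεi : 0 ≤ εi) (hM : 0 ≤ M)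
    (hr : 0 ≤ r) (hn : 0 ≤ n) (hsv : 0 ≤ sv) (h1 : M ≤ n + εi * r) :
    α ^ 2 * M ^ 2 - α ^ 4 * (M ^ 2 * εi ^ 2 / σ) ≤ sv + σ * r ^ 2 + α ^ 2 * n ^ 2 := by
  have h2 : M ^ 2 - 2 * M * (εi * r) ≤ n ^ 2 :=
    penalty_sq_lower hM (by positivity) hn h1
  have h4 := mul_le_mul_of_nonneg_left h2 (by positivity : (0:ℝ) ≤ σ * α ^ 2)
  have hmain : σ * (α ^ 2 * M ^ 2 - α ^ 4 * (M ^ 2 * εi ^ 2 / σ))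
      ≤ σ * (sv + σ * r ^ 2 + α ^ 2 * n ^ 2) := by
    have e : σ * (α ^ 2 * M ^ 2 - α ^ 4 * (M ^ 2 * εi ^ 2 / σ))
        = σ * α ^ 2 * M ^ 2 - α ^ 4 * (M ^ 2 * εi ^ 2) := by
      field_simp
    rw [e]
    nlinarith [sq_nonneg (σ * r - α ^ 2 * M * εi), mul_nonneg hσ.le hsv, h4]
  exact le_of_mul_le_mul_left hmain hσ

end Aux

set_option maxHeartbeats 1600000 in
/-- Let `D` be a complex Hilbert space, `S : L²(ℝ) → D` bounded, `σ > 0`,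
`d ∈ D`, and let `u_σ = (S*S + σI)⁻¹S*d` be the Tikhonov minimizer; assume
`t·u_σ(t) ∈ L²(ℝ)`. For `α, ε > 0`, let
`J̃(α,ε) = inf_u (‖S u − d‖² + σ‖u‖² + α²‖T_ε u‖²)` and
`J̃(0) = ‖S u_σ − d‖² + σ‖u_σ‖²`. Then
`lim_{ε→0⁺} lim_{α→0⁺} α⁻²(J̃(α,ε) − J̃(0)) = ‖t·u_σ(t)‖²`. -/
theorem iterated_penalty_limit_is_time_spread
    {D : Type*} [NormedAddCommGroup D] [InnerProductSpace ℂ D] [CompleteSpace D]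
    (S : Lp ℂ 2 (volume : Measure ℝ) →L[ℂ] D)
    (σ : ℝ) (hσ : 0 < σ) (d : D)
    (uσ : Lp ℂ 2 (volume : Measure ℝ))
    (huσ : (adjoint S) (S uσ) + σ • uσ = (adjoint S) d)
    (huσt : MemLp (fun t : ℝ => (t : ℂ) * (uσ : ℝ → ℂ) t) 2 (volume : Measure ℝ)) :
    ∃ L : ℝ → ℝ,
      (∀ ε : ℝ, 0 < ε →
        Tendsto
          (fun α : ℝ =>
            ((⨅ u : Lp ℂ 2 (volume : Measure ℝ),
                (‖S u - d‖ ^ 2 + σ * ‖u‖ ^ 2 +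
                  α ^ 2 * ((eLpNorm (Teps ε (u : ℝ → ℂ)) 2 volume).toReal) ^ 2))
              - (‖S uσ - d‖ ^ 2 + σ * ‖uσ‖ ^ 2)) / α ^ 2)
          (nhdsWithin 0 (Set.Ioi 0)) (nhds (L ε))) ∧
      Tendsto L (nhdsWithin 0 (Set.Ioi 0))
        (nhds (((eLpNorm (fun t : ℝ => (t : ℂ) * (uσ : ℝ → ℂ) t) 2 volume).toReal) ^ 2)) := by
  classical
  haveI hHne : Nonempty (Lp ℂ 2 (volume : Measure ℝ)) := ⟨0⟩
  set wf : ℝ → ℂ := fun t : ℝ => (t : ℂ) * (uσ : ℝ → ℂ) t with hwf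
  -- quadratic decomposition of the Tikhonov functional
  have hF : ∀ u : Lp ℂ 2 (volume : Measure ℝ), ‖S u - d‖ ^ 2 + σ * ‖u‖ ^ 2
      = (‖S uσ - d‖ ^ 2 + σ * ‖uσ‖ ^ 2) + (‖S (u - uσ)‖ ^ 2 + σ * ‖u - uσ‖ ^ 2) := by
    intro u
    set v : Lp ℂ 2 (volume : Measure ℝ) := u - uσ with hv
    have hz : ⟪S uσ - d, S v⟫_ℂ + (σ : ℂ) * ⟪uσ, v⟫_ℂ = 0 := by
      have h1 : ⟪S uσ - d, S v⟫_ℂ = ⟪(adjoint S) (S uσ) - (adjoint S) d, v⟫_ℂ := by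
        rw [← map_sub]
        exact (adjoint_inner_left S v (S uσ - d)).symm
      have h2 : (σ : ℂ) * ⟪uσ, v⟫_ℂ = ⟪σ • uσ, v⟫_ℂ := by
        rw [RCLike.real_smul_eq_coe_smul (K := ℂ) σ, inner_smul_real_left,
          Complex.real_smul]
      have h3 : ⟪(adjoint S) (S uσ) - (adjoint S) d, v⟫_ℂ + ⟪σ • uσ, v⟫_ℂ
          = ⟪((adjoint S) (S uσ) + σ • uσ) - (adjoint S) d, v⟫_ℂ := by
        rw [inner_sub_left, inner_sub_left, inner_add_left]; ring
      rw [h1, h2, h3, huσ, sub_self, inner_zero_left]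
    have hre : RCLike.re ⟪S uσ - d, S v⟫_ℂ + σ * RCLike.re ⟪uσ, v⟫_ℂ = 0 := by
      have := congrArg RCLike.re hz
      simpa [map_add, RCLike.re_ofReal_mul] using this
    have e1 : ‖S u - d‖ ^ 2
        = ‖S uσ - d‖ ^ 2 + 2 * RCLike.re ⟪S uσ - d, S v⟫_ℂ + ‖S v‖ ^ 2 := by
      have hSu : S u - d = (S uσ - d) + S v := by rw [hv, map_sub]; abel
      rw [hSu]; exact norm_add_sq _ _
    have e2 : ‖u‖ ^ 2 = ‖uσ‖ ^ 2 + 2 * RCLike.re ⟪uσ, v⟫_ℂ + ‖v‖ ^ 2 := by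
      have := norm_add_sq (𝕜 := ℂ) uσ v
      rw [show uσ + v = u from by rw [hv]; abel] at this
      exact this
    rw [e1, e2]; ring_nf; nlinarith [hre]
  refine ⟨fun ε => ((eLpNorm (Teps ε (uσ : ℝ → ℂ)) 2 volume).toReal) ^ 2, ?_, ?_⟩
  · -- inner limit for each ε > 0
    intro ε hε
    have hmem : ∀ u : Lp ℂ 2 (volume : Measure ℝ), MemLp (Teps ε (u : ℝ → ℂ)) 2 (volume : Measure ℝ) :=
      fun u => teps_memLp hε (Lp.memLp u)
    set T : Lp ℂ 2 (volume : Measure ℝ) → Lp ℂ 2 (volume : Measure ℝ) := fun u => (hmem u).toLp _ with hT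
    have hNT : ∀ u : Lp ℂ 2 (volume : Measure ℝ), (eLpNorm (Teps ε (u : ℝ → ℂ)) 2 volume).toReal = ‖T u‖ :=
      fun u => (Lp.norm_toLp _ _).symm
    have hTadd : ∀ u v : Lp ℂ 2 (volume : Measure ℝ), T (u + v) = T u + T v := by
      intro u v
      rw [hT]
      simp only
      rw [← MemLp.toLp_add (hmem u) (hmem v)]
      refine MemLp.toLp_congr _ _ ?_
      filter_upwards [Lp.coeFn_add u v] with t ht
      simp only [Teps, ht, Pi.add_apply, mul_add]
    have hTbound : ∀ u : Lp ℂ 2 (volume : Measure ℝ), ‖T u‖ ≤ ε⁻¹ * ‖u‖ := by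
      intro u
      rw [← hNT]
      have h1 := teps_eLpNorm_le hε (u : ℝ → ℂ)
      have h2 : ((‖(ε⁻¹ : ℝ)‖₊ : ENNReal) * eLpNorm (u : ℝ → ℂ) 2 volume).toReal
          = ε⁻¹ * ‖u‖ := by
        rw [ENNReal.toReal_mul, Lp.norm_def]
        congr 1
        simp [Real.norm_eq_abs, abs_of_pos (inv_pos.2 hε), hε.le]
      calc (eLpNorm (Teps ε (u : ℝ → ℂ)) 2 volume).toReal
          ≤ ((‖(ε⁻¹ : ℝ)‖₊ : ENNReal) * eLpNorm (u : ℝ → ℂ) 2 volume).toReal := by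
            refine ENNReal.toReal_mono ?_ h1
            exact ENNReal.mul_ne_top ENNReal.coe_ne_top (Lp.memLp u).2.ne
        _ = ε⁻¹ * ‖u‖ := h2
    set M : ℝ := ‖T uσ‖ with hM
    set c0 : ℝ := ‖S uσ - d‖ ^ 2 + σ * ‖uσ‖ ^ 2 with hc0
    set K : ℝ := M ^ 2 * ε⁻¹ ^ 2 / σ with hK
    have hMnn : 0 ≤ M := norm_nonneg _
    have hKnn : 0 ≤ K := by
      rw [hK]; exact div_nonneg (by positivity) hσ.le
    -- per-point lower bound
    have hper : ∀ (α : ℝ) (u : Lp ℂ 2 (volume : Measure ℝ)),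
        c0 + α ^ 2 * M ^ 2 - α ^ 4 * K
          ≤ ‖S u - d‖ ^ 2 + σ * ‖u‖ ^ 2 +
              α ^ 2 * ((eLpNorm (Teps ε (u : ℝ → ℂ)) 2 volume).toReal) ^ 2 := by
      intro α u
      rw [hF u, hNT u]
      have h1 : M ≤ ‖T u‖ + ε⁻¹ * ‖u - uσ‖ := by
        have e : T uσ = T u + T (uσ - u) := by
          rw [← hTadd]
          congr 1
          abel
        calc M = ‖T u + T (uσ - u)‖ := by rw [hM, e]
          _ ≤ ‖T u‖ + ‖T (uσ - u)‖ := norm_add_le _ _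
          _ ≤ ‖T u‖ + ε⁻¹ * ‖uσ - u‖ := add_le_add_right (hTbound _) _
          _ = ‖T u‖ + ε⁻¹ * ‖u - uσ‖ := by rw [norm_sub_rev]
      have key := penalty_arith (σ := σ) (εi := ε⁻¹) (α := α) (M := M)
        (r := ‖u - uσ‖) (n := ‖T u‖) (sv := ‖S (u - uσ)‖ ^ 2) hσ
        (by positivity) hMnn (norm_nonneg _) (norm_nonneg _) (sq_nonneg _) h1
      rw [hK]
      linarith
    have hbdd : ∀ α : ℝ, BddBelow (Set.range fun u : Lp ℂ 2 (volume : Measure ℝ) =>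
        ‖S u - d‖ ^ 2 + σ * ‖u‖ ^ 2 +
          α ^ 2 * ((eLpNorm (Teps ε (u : ℝ → ℂ)) 2 volume).toReal) ^ 2) := by
      intro α
      refine ⟨0, ?_⟩
      rintro x ⟨u, rfl⟩
      have := hσ.le
      positivity
    have hup : ∀ α : ℝ, (⨅ u : Lp ℂ 2 (volume : Measure ℝ), (‖S u - d‖ ^ 2 + σ * ‖u‖ ^ 2 +
        α ^ 2 * ((eLpNorm (Teps ε (u : ℝ → ℂ)) 2 volume).toReal) ^ 2))
          ≤ c0 + α ^ 2 * M ^ 2 := by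
      intro α
      have h := ciInf_le (hbdd α) uσ
      rw [hNT uσ] at h
      calc (⨅ u : Lp ℂ 2 (volume : Measure ℝ), (‖S u - d‖ ^ 2 + σ * ‖u‖ ^ 2 +
            α ^ 2 * ((eLpNorm (Teps ε (u : ℝ → ℂ)) 2 volume).toReal) ^ 2))
          ≤ ‖S uσ - d‖ ^ 2 + σ * ‖uσ‖ ^ 2 + α ^ 2 * ‖T uσ‖ ^ 2 := h
        _ = c0 + α ^ 2 * M ^ 2 := by rw [hc0, hM]
    have hlo : ∀ α : ℝ, c0 + α ^ 2 * M ^ 2 - α ^ 4 * K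
        ≤ (⨅ u : Lp ℂ 2 (volume : Measure ℝ), (‖S u - d‖ ^ 2 + σ * ‖u‖ ^ 2 +
            α ^ 2 * ((eLpNorm (Teps ε (u : ℝ → ℂ)) 2 volume).toReal) ^ 2)) :=
      fun α => le_ciInf (hper α)
    -- squeeze
    have hgoalval : ((eLpNorm (Teps ε (uσ : ℝ → ℂ)) 2 volume).toReal) ^ 2 = M ^ 2 := by
      rw [hNT uσ]
    have hgoalval' : (fun ε : ℝ =>
        ((eLpNorm (Teps ε (uσ : ℝ → ℂ)) 2 volume).toReal) ^ 2) ε = M ^ 2 := hgoalval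
    rw [hgoalval']
    have hglim : Tendsto (fun α : ℝ => M ^ 2 - α ^ 2 * K)
        (nhdsWithin 0 (Set.Ioi 0)) (nhds (M ^ 2)) := by
      have hc : Continuous fun α : ℝ => M ^ 2 - α ^ 2 * K :=
        continuous_const.sub ((continuous_pow 2).mul continuous_const)
      have := (hc.tendsto 0).mono_left
        (nhdsWithin_le_nhds (s := Set.Ioi (0:ℝ)))
      simpa using this
    refine tendsto_of_tendsto_of_tendsto_of_le_of_le' hglim tendsto_const_nhds ?_ ?_
    · filter_upwards [self_mem_nhdsWithin] with α (hα : α ∈ Set.Ioi 0)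
      have hα2 : (0:ℝ) < α ^ 2 := pow_pos (Set.mem_Ioi.mp hα) 2
      rw [le_div_iff₀ hα2]
      have := hlo α
      nlinarith
    · filter_upwards [self_mem_nhdsWithin] with α (hα : α ∈ Set.Ioi 0)
      have hα2 : (0:ℝ) < α ^ 2 := pow_pos (Set.mem_Ioi.mp hα) 2
      rw [div_le_iff₀ hα2]
      have := hup α
      nlinarith
  · -- outer limit as ε → 0⁺
    have hwmeas : Measurable wf :=
      Complex.measurable_ofReal.mul (Lp.stronglyMeasurable uσ).measurable
    have hint : (∫⁻ t, (‖wf t‖₊ : ENNReal) ^ (2:ℝ) ∂(volume : Measure ℝ)) < ⊤ := by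
      have := lintegral_rpow_enorm_lt_top_of_eLpNorm_lt_top (p := (2:ENNReal))
        (f := wf) (by norm_num) (by norm_num) huσt.2
      rw [ENNReal.toReal_ofNat] at this
      exact this
    have hDC : Tendsto
        (fun ε : ℝ => ∫⁻ t, (‖Teps ε (uσ : ℝ → ℂ) t - wf t‖₊ : ENNReal) ^ (2:ℝ)
          ∂(volume : Measure ℝ))
        (nhdsWithin 0 (Set.Ioi 0)) (nhds 0) := by
      have h := tendsto_lintegral_filter_of_dominated_convergence
        (μ := (volume : Measure ℝ)) (l := nhdsWithin (0:ℝ) (Set.Ioi 0))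
        (F := fun ε t => (‖Teps ε (uσ : ℝ → ℂ) t - wf t‖₊ : ENNReal) ^ (2:ℝ))
        (f := fun _ => (0:ENNReal))
        (fun t => ((2:ENNReal) * (‖wf t‖₊ : ENNReal)) ^ (2:ℝ))
        ?_ ?_ ?_ ?_
      · simpa using h
      · refine Eventually.of_forall fun ε => ?_
        have hm : Measurable fun t => Teps ε (uσ : ℝ → ℂ) t - wf t :=
          ((teps_mult_cont ε).measurable.mul (Lp.stronglyMeasurable uσ).measurable).sub hwmeas
        exact (ENNReal.continuous_rpow_const.measurable).comp hm.enorm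
      · refine Eventually.of_forall fun ε => Eventually.of_forall fun t => ?_
        have hb : ‖Teps ε (uσ : ℝ → ℂ) t - wf t‖ ≤ 2 * ‖wf t‖ := by
          have h1 := teps_norm_le_abs ε (uσ : ℝ → ℂ) t
          have h2 := norm_sub_le (Teps ε (uσ : ℝ → ℂ) t) (wf t)
          rw [hwf] at *
          simp only at h1 h2 ⊢
          linarith
        refine ENNReal.rpow_le_rpow ?_ (by norm_num)
        have : ‖Teps ε (uσ : ℝ → ℂ) t - wf t‖₊ ≤ 2 * ‖wf t‖₊ := by
          rw [← NNReal.coe_le_coe]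
          push_cast
          exact hb
        exact_mod_cast this
      · have heq : ∀ t : ℝ, ((2:ENNReal) * (‖wf t‖₊ : ENNReal)) ^ (2:ℝ)
            = (2:ENNReal) ^ (2:ℝ) * (‖wf t‖₊ : ENNReal) ^ (2:ℝ) := fun t =>
          ENNReal.mul_rpow_of_nonneg _ _ (by norm_num)
        simp only [heq]
        rw [lintegral_const_mul' _ _ (by norm_num)]
        exact (ENNReal.mul_lt_top (by norm_num) hint).ne
      · refine Eventually.of_forall fun t => ?_
        have hc : Continuous fun ε : ℝ =>
            ((t / Real.sqrt (1 + ε ^ 2 * t ^ 2) : ℝ) : ℂ) * (uσ : ℝ → ℂ) t := by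
          refine Continuous.mul ?_ continuous_const
          refine Complex.continuous_ofReal.comp ?_
          refine continuous_const.div (Real.continuous_sqrt.comp (by continuity)) ?_
          exact fun ε => ne_of_gt (teps_sqrt_pos ε t)
        have h0 : Tendsto (fun ε : ℝ => Teps ε (uσ : ℝ → ℂ) t - wf t)
            (nhdsWithin 0 (Set.Ioi 0)) (nhds 0) := by
          have := (hc.tendsto 0).mono_left
            (nhdsWithin_le_nhds (s := Set.Ioi (0:ℝ)))
          have hval : ((t / Real.sqrt (1 + (0:ℝ) ^ 2 * t ^ 2) : ℝ) : ℂ) * (uσ : ℝ → ℂ) t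
              = wf t := by
            simp [hwf, Real.sqrt_one]
          rw [hval] at this
          simpa [Teps] using this.sub_const (wf t)
        have hcomp : Continuous fun z : ℂ => ((‖z‖₊ : ENNReal)) ^ (2:ℝ) :=
          ENNReal.continuous_rpow_const.comp (ENNReal.continuous_coe.comp continuous_nnnorm)
        have := (hcomp.tendsto 0).comp h0
        simpa [Function.comp_def, ENNReal.zero_rpow_of_pos] using this
    -- from lintegral convergence to eLpNorm convergence
    have hE : Tendsto (fun ε : ℝ =>
        eLpNorm (fun t => Teps ε (uσ : ℝ → ℂ) t - wf t) 2 (volume : Measure ℝ))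
        (nhdsWithin 0 (Set.Ioi 0)) (nhds 0) := by
      have heq : ∀ ε : ℝ,
          eLpNorm (fun t => Teps ε (uσ : ℝ → ℂ) t - wf t) 2 (volume : Measure ℝ)
          = (∫⁻ t, (‖Teps ε (uσ : ℝ → ℂ) t - wf t‖₊ : ENNReal) ^ (2:ℝ)
              ∂(volume : Measure ℝ)) ^ (1/(2:ℝ)) := by
        intro ε
        rw [eLpNorm_eq_lintegral_rpow_enorm_toReal (by norm_num) (by norm_num)]
        norm_num
        rfl
      simp only [heq]
      have := (ENNReal.continuous_rpow_const (y := 1/(2:ℝ))).tendsto 0 |>.comp hDC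
      simpa [Function.comp_def, ENNReal.zero_rpow_of_pos] using this
    have hD0 : Tendsto (fun ε : ℝ =>
        (eLpNorm (fun t => Teps ε (uσ : ℝ → ℂ) t - wf t) 2 (volume : Measure ℝ)).toReal)
        (nhdsWithin 0 (Set.Ioi 0)) (nhds 0) := by
      have := (ENNReal.tendsto_toReal (by simp : (0:ENNReal) ≠ ⊤)).comp hE
      simpa [Function.comp_def] using this
    set c : ℝ := (eLpNorm wf 2 (volume : Measure ℝ)).toReal with hc
    have hsq : ∀ᶠ ε : ℝ in nhdsWithin 0 (Set.Ioi 0),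
        ‖(eLpNorm (Teps ε (uσ : ℝ → ℂ)) 2 volume).toReal - c‖
          ≤ (eLpNorm (fun t => Teps ε (uσ : ℝ → ℂ) t - wf t) 2 (volume : Measure ℝ)).toReal := by
      filter_upwards [self_mem_nhdsWithin] with ε (hε : ε ∈ Set.Ioi 0)
      have hmem : MemLp (Teps ε (uσ : ℝ → ℂ)) 2 (volume : Measure ℝ) :=
        teps_memLp hε (Lp.memLp uσ)
      set a := hmem.toLp _ with ha
      set b := huσt.toLp _ with hb
      have hna : ‖a‖ = (eLpNorm (Teps ε (uσ : ℝ → ℂ)) 2 volume).toReal := Lp.norm_toLp _ _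
      have hnb : ‖b‖ = c := Lp.norm_toLp _ _
      have hne : ‖a - b‖
          = (eLpNorm (fun t => Teps ε (uσ : ℝ → ℂ) t - wf t) 2 (volume : Measure ℝ)).toReal := by
        rw [Lp.norm_def]
        congr 1
        refine eLpNorm_congr_ae ?_
        filter_upwards [Lp.coeFn_sub a b, hmem.coeFn_toLp, huσt.coeFn_toLp] with t h1 h2 h3
        rw [h1]
        simp only [Pi.sub_apply, h2, h3]
        exact congrArg₂ (· - ·) h2 h3
      rw [← hna, ← hnb, ← hne, Real.norm_eq_abs]
      exact abs_norm_sub_norm_le a b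
    have hL1 : Tendsto (fun ε : ℝ => (eLpNorm (Teps ε (uσ : ℝ → ℂ)) 2 volume).toReal)
        (nhdsWithin 0 (Set.Ioi 0)) (nhds c) := by
      have h := squeeze_zero_norm' hsq hD0
      have := h.add (tendsto_const_nhds (x := c))
      simpa using this
    exact hL1.pow 2
end
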